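/- arXiv:1808.01750 — 5 statements merged into one kernel-verified Lean document; each statement's English description precedes it below -/
import Mathlib

section
/- Let P_X be a Borel probability measure on ℝ having at least one atom, and let Q_Y be a continuous (atomless) Borel probability measure on ℝ. Then the optimal KS approximation error for simulating Q_Y from P_X satisfies inf over measurable f : ℝ → ℝ of |f_*P_X − Q_Y|_KS = (1/2)·max_x P_X({x}). -/
open MeasureTheory Set

noncomputable def cdfR (μ : Measure ℝ) (x : ℝ) : ℝ := (μ (Set.Iic x)).toReal

noncomputable def KSdist (μ ν : Measure ℝ) : ℝ := ⨆ x : ℝ, |cdfR μ x - cdfR ν x|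

open Filter Topology
open scoped ENNReal

namespace KSaux

lemma one_div_pos' (n : ℕ) : (0:ℝ) < 1/(n+1) := by positivity

lemma iInter_Iic_add (a : ℝ) : (⋂ n : ℕ, Iic (a + 1/(n+1))) = Iic a := by
  ext x
  simp only [mem_iInter, mem_Iic]
  constructor
  · intro hx
    by_contra h
    push_neg at h
    obtain ⟨n, hn⟩ := exists_nat_one_div_lt (sub_pos.2 h)
    have := hx n
    linarith
  · intro hx n
    have := one_div_pos' n
    linarith

lemma iUnion_Iic_sub (a : ℝ) : (⋃ n : ℕ, Iic (a - 1/(n+1))) = Iio a := by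
  ext x
  simp only [mem_iUnion, mem_Iic, mem_Iio]
  constructor
  · rintro ⟨n, hn⟩
    have := one_div_pos' n
    linarith
  · intro hx
    obtain ⟨n, hn⟩ := exists_nat_one_div_lt (sub_pos.2 hx)
    exact ⟨n, by linarith⟩

lemma iInter_Ioc_sub (a : ℝ) : (⋂ n : ℕ, Ioc (a - 1/(n+1)) a) = {a} := by
  ext x
  simp only [mem_iInter, mem_Ioc, mem_singleton_iff]
  constructor
  · intro hx
    have hle : x ≤ a := (hx 0).2
    rcases eq_or_lt_of_le hle with h | h
    · exact h
    · obtain ⟨n, hn⟩ := exists_nat_one_div_lt (sub_pos.2 h)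
      have := (hx n).1
      linarith
  · rintro rfl
    exact fun n => ⟨by have := one_div_pos' n; linarith, le_rfl⟩

lemma iInter_Iic_neg : (⋂ n : ℕ, Iic (-(n:ℝ))) = (∅ : Set ℝ) := by
  ext x
  simp only [mem_iInter, mem_Iic, mem_empty_iff_false, iff_false, not_forall]
  obtain ⟨n, hn⟩ := exists_nat_gt (-x)
  exact ⟨n, by push_neg; linarith⟩

lemma iUnion_Iic_nat : (⋃ n : ℕ, Iic ((n:ℝ))) = (univ : Set ℝ) := by
  ext x
  simp only [mem_iUnion, mem_Iic, mem_univ, iff_true]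
  obtain ⟨n, hn⟩ := exists_nat_gt x
  exact ⟨n, hn.le⟩

variable {μ : Measure ℝ} [IsFiniteMeasure μ]

lemma cdfR_mono : Monotone (cdfR μ) := fun x y hxy =>
  ENNReal.toReal_mono (measure_ne_top μ _) (measure_mono (Iic_subset_Iic.2 hxy))

/-- Right continuity (sequential, ε-form). -/
lemma exists_right (a : ℝ) {ε : ℝ} (hε : 0 < ε) :
    ∃ δ > 0, cdfR μ (a + δ) < cdfR μ a + ε := by
  have h1 : Tendsto (fun n : ℕ => μ (Iic (a + 1/(n+1)))) atTop (𝓝 (μ (Iic a))) := by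
    have := tendsto_measure_iInter_atTop (μ := μ)
      (s := fun n : ℕ => Iic (a + 1/(n+1)))
      (fun n => measurableSet_Iic.nullMeasurableSet)
      (fun n m hnm => Iic_subset_Iic.2 (by
        have h1 : (1:ℝ)/(m+1) ≤ 1/(n+1) := by
          apply one_div_le_one_div_of_le (by positivity)
          exact_mod_cast by omega
        linarith))
      ⟨0, measure_ne_top μ _⟩
    rwa [iInter_Iic_add] at this
  have h2 : Tendsto (fun n : ℕ => cdfR μ (a + 1/(n+1))) atTop (𝓝 (cdfR μ a)) :=
    (ENNReal.tendsto_toReal (measure_ne_top μ _)).comp h1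
  have h3 : ∀ᶠ n : ℕ in atTop, cdfR μ (a + 1/(n+1)) < cdfR μ a + ε :=
    (h2.eventually (eventually_lt_nhds (by linarith : cdfR μ a < cdfR μ a + ε)))
  obtain ⟨n, hn⟩ := h3.exists
  exact ⟨1/(n+1), one_div_pos' n, hn⟩

/-- Left limit (sequential, ε-form): values below `a` approximate `μ (Iio a)`. -/
lemma exists_left (a : ℝ) {ε : ℝ} (hε : 0 < ε) :
    ∃ δ > 0, (μ (Iio a)).toReal - ε < cdfR μ (a - δ) := by
  have h1 : Tendsto (fun n : ℕ => μ (Iic (a - 1/(n+1)))) atTop (𝓝 (μ (Iio a))) := by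
    have := tendsto_measure_iUnion_atTop (μ := μ)
      (s := fun n : ℕ => Iic (a - 1/(n+1)))
      (fun n m hnm => Iic_subset_Iic.2 (by
        have h1 : (1:ℝ)/(m+1) ≤ 1/(n+1) := by
          apply one_div_le_one_div_of_le (by positivity)
          exact_mod_cast by omega
        linarith))
    rwa [iUnion_Iic_sub] at this
  have h2 : Tendsto (fun n : ℕ => cdfR μ (a - 1/(n+1))) atTop (𝓝 ((μ (Iio a)).toReal)) :=
    (ENNReal.tendsto_toReal (measure_ne_top μ _)).comp h1
  have h3 := (h2.eventually (eventually_gt_nhds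
    (by linarith : (μ (Iio a)).toReal - ε < (μ (Iio a)).toReal))).exists
  obtain ⟨n, hn⟩ := h3
  exact ⟨1/(n+1), one_div_pos' n, hn⟩

lemma exists_small {ε : ℝ} (hε : 0 < ε) : ∃ x : ℝ, cdfR μ x < ε := by
  have h1 : Tendsto (fun n : ℕ => μ (Iic (-(n:ℝ)))) atTop (𝓝 (μ (∅ : Set ℝ))) := by
    have := tendsto_measure_iInter_atTop (μ := μ)
      (s := fun n : ℕ => Iic (-(n:ℝ)))
      (fun n => measurableSet_Iic.nullMeasurableSet)
      (fun n m hnm => Iic_subset_Iic.2 (by exact_mod_cast neg_le_neg (by exact_mod_cast hnm)))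
      ⟨0, measure_ne_top μ _⟩
    rwa [iInter_Iic_neg] at this
  have h2 : Tendsto (fun n : ℕ => cdfR μ (-(n:ℝ))) atTop (𝓝 0) := by
    simpa [cdfR, Function.comp_def] using (ENNReal.tendsto_toReal (by simp : μ (∅ : Set ℝ) ≠ ⊤)).comp h1
  obtain ⟨n, hn⟩ := (h2.eventually (eventually_lt_nhds hε)).exists
  exact ⟨-(n:ℝ), hn⟩

lemma exists_large [IsProbabilityMeasure μ] {ε : ℝ} (hε : 0 < ε) :
    ∃ x : ℝ, 1 - ε < cdfR μ x := by
  have h1 : Tendsto (fun n : ℕ => μ (Iic ((n:ℝ)))) atTop (𝓝 (μ (univ : Set ℝ))) := by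
    have := tendsto_measure_iUnion_atTop (μ := μ)
      (s := fun n : ℕ => Iic ((n:ℝ)))
      (fun n m hnm => Iic_subset_Iic.2 (by exact_mod_cast hnm))
    rwa [iUnion_Iic_nat] at this
  have h2 : Tendsto (fun n : ℕ => cdfR μ ((n:ℝ))) atTop (𝓝 1) := by
    have := (ENNReal.tendsto_toReal (by simp : μ (univ : Set ℝ) ≠ ⊤)).comp h1
    simpa [measure_univ, cdfR, Function.comp_def] using this
  obtain ⟨n, hn⟩ := (h2.eventually (eventually_gt_nhds (by linarith : 1 - ε < (1:ℝ)))).exists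
  exact ⟨(n:ℝ), hn⟩

/-- For atomless μ: small Ioc just below a. -/
lemma exists_Ioc_small [NullSingletonClass μ] (a : ℝ) {ε : ℝ} (hε : 0 < ε) :
    ∃ b < a, (μ (Ioc b a)).toReal < ε := by
  have h1 : Tendsto (fun n : ℕ => μ (Ioc (a - 1/(n+1)) a)) atTop (𝓝 (μ ({a} : Set ℝ))) := by
    have := tendsto_measure_iInter_atTop (μ := μ)
      (s := fun n : ℕ => Ioc (a - 1/(n+1)) a)
      (fun n => measurableSet_Ioc.nullMeasurableSet)
      (fun n m hnm => Ioc_subset_Ioc (by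
        have h1 : (1:ℝ)/(m+1) ≤ 1/(n+1) := by
          apply one_div_le_one_div_of_le (by positivity)
          exact_mod_cast by omega
        linarith) le_rfl)
      ⟨0, measure_ne_top μ _⟩
    rwa [iInter_Ioc_sub] at this
  rw [measure_singleton] at h1
  have h2 : Tendsto (fun n : ℕ => (μ (Ioc (a - 1/(n+1)) a)).toReal) atTop (𝓝 0) := by
    simpa [Function.comp_def] using (ENNReal.tendsto_toReal (by simp : (0 : ℝ≥0∞) ≠ ⊤)).comp h1
  obtain ⟨n, hn⟩ := (h2.eventually (eventually_lt_nhds hε)).exists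
  exact ⟨a - 1/(n+1), by have := one_div_pos' n; linarith, hn⟩

lemma cdfR_diff {y' y : ℝ} (h : y' ≤ y) :
    cdfR μ y - cdfR μ y' = (μ (Ioc y' y)).toReal := by
  have hu : μ (Iic y) = μ (Iic y') + μ (Ioc y' y) := by
    rw [← measure_union (Iic_disjoint_Ioc le_rfl) measurableSet_Ioc, Iic_union_Ioc_eq_Iic h]
  simp only [cdfR, hu, ENNReal.toReal_add (measure_ne_top μ _) (measure_ne_top μ _)]
  ring

/-! ### The midpoint function -/

noncomputable def hfun (P : Measure ℝ) (x : ℝ) : ℝ :=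
  ((P (Iic x)).toReal + (P (Iio x)).toReal) / 2

lemma Iic_split (P : Measure ℝ) [IsFiniteMeasure P] (x : ℝ) :
    (P (Iic x)).toReal = (P (Iio x)).toReal + (P {x}).toReal := by
  rw [← Iio_union_right, measure_union (by simp) (measurableSet_singleton x),
    ENNReal.toReal_add (measure_ne_top P _) (measure_ne_top P _)]

lemma hfun_mono (P : Measure ℝ) [IsFiniteMeasure P] : Monotone (hfun P) := by
  intro x y hxy
  have h1 := cdfR_mono (μ := P) hxy
  have h2 : (P (Iio x)).toReal ≤ (P (Iio y)).toReal :=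
    ENNReal.toReal_mono (measure_ne_top P _) (measure_mono (Iio_subset_Iio hxy))
  simp only [hfun, cdfR] at *
  linarith

lemma hfun_le (P : Measure ℝ) [IsFiniteMeasure P] (x : ℝ) : hfun P x ≤ cdfR P x := by
  have h2 : (P (Iio x)).toReal ≤ (P (Iic x)).toReal :=
    ENNReal.toReal_mono (measure_ne_top P _) (measure_mono Iio_subset_Iic_self)
  simp only [hfun, cdfR]; linarith

lemma le_hfun (P : Measure ℝ) [IsFiniteMeasure P] (x : ℝ) : (P (Iio x)).toReal ≤ hfun P x := by
  have h2 : (P (Iio x)).toReal ≤ (P (Iic x)).toReal :=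
    ENNReal.toReal_mono (measure_ne_top P _) (measure_mono Iio_subset_Iic_self)
  simp only [hfun]; linarith

lemma hfun_nonneg (P : Measure ℝ) [IsFiniteMeasure P] (x : ℝ) : 0 ≤ hfun P x :=
  le_trans ENNReal.toReal_nonneg (le_hfun P x)

lemma cdfR_le_one' (P : Measure ℝ) [IsProbabilityMeasure P] (x : ℝ) : cdfR P x ≤ 1 := by
  have : P (Iic x) ≤ 1 := (measure_mono (subset_univ _)).trans_eq measure_univ
  simpa [cdfR] using ENNReal.toReal_mono (by simp) this

lemma hfun_le_one (P : Measure ℝ) [IsProbabilityMeasure P] (x : ℝ) : hfun P x ≤ 1 :=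
  (hfun_le P x).trans (cdfR_le_one' P x)

lemma jump_le_iSup (P : Measure ℝ) [IsProbabilityMeasure P] (x : ℝ) :
    (P {x}).toReal ≤ ⨆ y : ℝ, (P {y}).toReal := by
  apply le_ciSup (f := fun y : ℝ => (P {y}).toReal)
  refine ⟨1, ?_⟩
  rintro _ ⟨y, rfl⟩
  have : P {y} ≤ 1 := (measure_mono (subset_univ _)).trans_eq measure_univ
  simpa using ENNReal.toReal_mono (by simp) this

lemma iSup_jump_nonneg (P : Measure ℝ) [IsProbabilityMeasure P] :
    0 ≤ ⨆ y : ℝ, (P {y}).toReal :=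
  Real.iSup_nonneg fun _ => ENNReal.toReal_nonneg

lemma cdfR_eq_hfun_add (P : Measure ℝ) [IsFiniteMeasure P] (x : ℝ) :
    cdfR P x = hfun P x + (P {x}).toReal / 2 := by
  simp only [hfun, cdfR, Iic_split P x]; ring

lemma Iio_eq_hfun_sub (P : Measure ℝ) [IsFiniteMeasure P] (x : ℝ) :
    (P (Iio x)).toReal = hfun P x - (P {x}).toReal / 2 := by
  simp only [hfun, cdfR, Iic_split P x]; ring

/-! ### The key distributional lemma -/

lemma key_upper (P : Measure ℝ) [IsProbabilityMeasure P] {t : ℝ} (ht0 : 0 ≤ t) :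
    (P {x | hfun P x ≤ t}).toReal ≤ t + (⨆ y : ℝ, (P {y}).toReal) / 2 := by
  set M := ⨆ y : ℝ, (P {y}).toReal with hM
  have hM0 := iSup_jump_nonneg P
  set A := {x | hfun P x ≤ t} with hA
  have hFA : ∀ x ∈ A, cdfR P x ≤ t + M / 2 := by
    intro x hx
    have h1 := cdfR_eq_hfun_add P x
    have h2 := jump_le_iSup P x
    have hx' : hfun P x ≤ t := hx
    rw [h1]; rw [← hM] at h2; linarith
  rcases eq_empty_or_nonempty A with hAe | hAne
  · rw [hAe]; simp; linarith
  by_cases hbdd : BddAbove A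
  · set s := sSup A with hs
    by_cases hsA : s ∈ A
    · have hsub : A ⊆ Iic s := fun a ha => le_csSup hbdd ha
      have h1 : (P A).toReal ≤ cdfR P s :=
        ENNReal.toReal_mono (measure_ne_top P _) (measure_mono hsub)
      exact h1.trans (hFA s hsA)
    · have hsub : A ⊆ Iio s := by
        intro a ha
        rcases lt_or_eq_of_le (le_csSup hbdd ha) with h | h
        · exact h
        · rw [h] at ha; exact absurd ha hsA
      have hP : (P A).toReal ≤ (P (Iio s)).toReal :=
        ENNReal.toReal_mono (measure_ne_top P _) (measure_mono hsub)
      have h1 : (P (Iio s)).toReal ≤ t + M / 2 := by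
        apply le_of_forall_pos_le_add
        intro ε hε
        obtain ⟨δ, hδ, hδ2⟩ := exists_left (μ := P) s hε
        obtain ⟨a, haA, hlt⟩ := exists_lt_of_lt_csSup hAne (by linarith : s - δ < s)
        have h3 := cdfR_mono (μ := P) hlt.le
        have h4 := hFA a haA
        linarith
      linarith
  · have hAu : A = univ := by
      ext y
      simp only [mem_univ, iff_true]
      obtain ⟨a, haA, hya⟩ := (not_bddAbove_iff.1 hbdd) y
      exact le_trans (hfun_mono P hya.le) haA
    have hPA : (P A).toReal = 1 := by rw [hAu, measure_univ]; simp
    rw [hPA]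
    apply le_of_forall_pos_le_add
    intro ε hε
    obtain ⟨x, hx⟩ := exists_large (μ := P) hε
    have h4 := hFA x (by rw [hAu]; trivial)
    linarith

lemma key_lower (P : Measure ℝ) [IsProbabilityMeasure P] {t : ℝ} (ht1 : t ≤ 1) :
    t - (⨆ y : ℝ, (P {y}).toReal) / 2 ≤ (P {x | hfun P x ≤ t}).toReal := by
  set M := ⨆ y : ℝ, (P {y}).toReal with hM
  have hM0 := iSup_jump_nonneg P
  set A := {x | hfun P x ≤ t} with hA
  have hPA0 : 0 ≤ (P A).toReal := ENNReal.toReal_nonneg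
  set B := {x | t < hfun P x} with hB
  have hBA : ∀ x, x ∉ B → x ∈ A := by
    intro x hx
    simp only [hB, mem_setOf_eq] at hx
    exact le_of_not_gt hx
  have hFB : ∀ x ∈ B, t - M / 2 < (P (Iio x)).toReal := by
    intro x hx
    have h1 := Iio_eq_hfun_sub P x
    have h2 := jump_le_iSup P x
    have hx' : t < hfun P x := hx
    rw [h1]; rw [← hM] at h2; linarith
  rcases eq_empty_or_nonempty B with hBe | hBne
  · have hAu : A = univ := by
      ext y
      simp only [mem_univ, iff_true]
      exact hBA y (by rw [hBe]; exact notMem_empty y)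
    rw [hAu, measure_univ]
    simp
    linarith
  by_cases hbdd : BddBelow B
  · set s := sInf B with hs
    have hIio : Iio s ⊆ A := by
      intro x hx
      apply hBA
      intro hxB
      exact absurd (csInf_le hbdd hxB) (not_le.2 hx)
    by_cases hsB : s ∈ B
    · have h1 : (P (Iio s)).toReal ≤ (P A).toReal :=
        ENNReal.toReal_mono (measure_ne_top P _) (measure_mono hIio)
      have h2 := hFB s hsB
      linarith
    · have hsA : s ∈ A := hBA s hsB
      have hIic : Iic s ⊆ A := by
        intro x hx
        exact le_trans (hfun_mono P hx) hsA
      have h1 : cdfR P s ≤ (P A).toReal :=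
        ENNReal.toReal_mono (measure_ne_top P _) (measure_mono hIic)
      have h2 : t - M / 2 ≤ cdfR P s := by
        apply le_of_forall_pos_le_add
        intro ε hε
        obtain ⟨δ, hδ, hδ2⟩ := exists_right (μ := P) s hε
        obtain ⟨b, hbB, hblt⟩ := exists_lt_of_csInf_lt hBne (by linarith : sInf B < s + δ)
        have h3 := hFB b hbB
        have h4 : (P (Iio b)).toReal ≤ cdfR P (s + δ) :=
          ENNReal.toReal_mono (measure_ne_top P _)
            (measure_mono (fun y hy => le_of_lt (lt_trans hy hblt)))
        linarith
      linarith
  · -- B unbounded below: B = univ, so t ≤ 0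
    have hBu : B = univ := by
      ext y
      simp only [mem_univ, iff_true]
      obtain ⟨b, hbB, hby⟩ := (not_bddBelow_iff.1 hbdd) y
      exact lt_of_lt_of_le hbB (hfun_mono P hby.le)
    have ht0 : t ≤ 0 := by
      by_contra h
      push_neg at h
      obtain ⟨x, hx⟩ := exists_small (μ := P) h
      have hxB : x ∈ B := by rw [hBu]; trivial
      have := hfun_le P x
      have hx' : t < hfun P x := hxB
      linarith
    linarith

/-! ### The quantile function of Q -/

noncomputable def quant (Q : Measure ℝ) (u : ℝ) : ℝ := sInf {y | u ≤ cdfR Q y}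

lemma quant_nonempty (Q : Measure ℝ) [IsProbabilityMeasure Q] {u : ℝ} (hu : u < 1) :
    {y | u ≤ cdfR Q y}.Nonempty := by
  obtain ⟨x, hx⟩ := exists_large (μ := Q) (by linarith : (0:ℝ) < 1 - u)
  exact ⟨x, by simp only [mem_setOf_eq]; linarith⟩

lemma quant_bddBelow (Q : Measure ℝ) [IsProbabilityMeasure Q] {u : ℝ} (hu : 0 < u) :
    BddBelow {y | u ≤ cdfR Q y} := by
  obtain ⟨x, hx⟩ := exists_small (μ := Q) hu
  refine ⟨x, fun z hz => ?_⟩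
  by_contra h
  push_neg at h
  have := cdfR_mono (μ := Q) h.le
  have hz' : u ≤ cdfR Q z := hz
  linarith

lemma le_cdfR_quant (Q : Measure ℝ) [IsProbabilityMeasure Q] {u : ℝ} (hu0 : 0 < u)
    (hu1 : u < 1) : u ≤ cdfR Q (quant Q u) := by
  apply le_of_forall_pos_le_add
  intro ε hε
  obtain ⟨δ, hδ, hδ2⟩ := exists_right (μ := Q) (quant Q u) hε
  obtain ⟨w, hw, hwlt⟩ := exists_lt_of_csInf_lt (quant_nonempty Q hu1)
    (by show quant Q u < quant Q u + δ; linarith)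
  have h1 : u ≤ cdfR Q w := hw
  have h2 := cdfR_mono (μ := Q) hwlt.le
  linarith

lemma quant_le_iff (Q : Measure ℝ) [IsProbabilityMeasure Q] {u y : ℝ} (hu0 : 0 < u)
    (hu1 : u < 1) : quant Q u ≤ y ↔ u ≤ cdfR Q y := by
  constructor
  · intro h
    exact le_trans (le_cdfR_quant Q hu0 hu1) (cdfR_mono (μ := Q) h)
  · intro h
    exact csInf_le (quant_bddBelow Q hu0) h

lemma quant_mono (Q : Measure ℝ) [IsProbabilityMeasure Q] {u v : ℝ} (hu0 : 0 < u)
    (huv : u ≤ v) (hv1 : v < 1) : quant Q u ≤ quant Q v := by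
  apply csInf_le_csInf (quant_bddBelow Q hu0) (quant_nonempty Q hv1)
  intro y hy
  have hy' : v ≤ cdfR Q y := hy
  exact le_trans huv hy'

/-! ### Upper bound construction -/

lemma upper (P Q : Measure ℝ) [IsProbabilityMeasure P] [IsProbabilityMeasure Q]
    {τ : ℝ} (hτ0 : 0 < τ) (hτ1 : τ ≤ 1/2) :
    ∃ f : ℝ → ℝ, Measurable f ∧
      KSdist (P.map f) Q ≤ (⨆ y : ℝ, (P {y}).toReal) / 2 + τ := by
  set M := ⨆ y : ℝ, (P {y}).toReal with hM
  have hM0 := iSup_jump_nonneg P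
  rw [← hM] at hM0
  have h1τ : (0:ℝ) < 1 - τ := by linarith
  set g : ℝ → ℝ := fun x => τ/2 + (1-τ) * hfun P x with hg
  have hg_lb : ∀ x, τ/2 ≤ g x := by
    intro x
    have h := hfun_nonneg P x
    simp only [hg]
    nlinarith
  have hg_ub : ∀ x, g x ≤ 1 - τ/2 := by
    intro x
    have h := hfun_le_one P x
    simp only [hg]
    nlinarith
  have hg0 : ∀ x, 0 < g x := fun x => lt_of_lt_of_le (by linarith) (hg_lb x)
  have hg1 : ∀ x, g x < 1 := fun x => lt_of_le_of_lt (hg_ub x) (by linarith)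
  have hg_mono : Monotone g := by
    intro x y hxy
    have h := hfun_mono P hxy
    simp only [hg]
    nlinarith
  set f : ℝ → ℝ := fun x => quant Q (g x) with hf
  have hf_mono : Monotone f := fun x y hxy =>
    quant_mono Q (hg0 x) (hg_mono hxy) (hg1 y)
  have hf_meas : Measurable f := hf_mono.measurable
  refine ⟨f, hf_meas, ?_⟩
  unfold KSdist
  apply ciSup_le
  intro y
  set t := cdfR Q y with ht
  have ht0 : 0 ≤ t := ENNReal.toReal_nonneg
  have ht1 : t ≤ 1 := cdfR_le_one' Q y
  set t' : ℝ := (t - τ/2)/(1-τ) with ht'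
  have htt : (1-τ) * t' = t - τ/2 := by
    rw [ht', mul_div_cancel₀ _ (ne_of_gt h1τ)]
  have hmap : cdfR (P.map f) y = (P {x | hfun P x ≤ t'}).toReal := by
    rw [cdfR, Measure.map_apply hf_meas measurableSet_Iic]
    congr 2
    ext x
    simp only [mem_preimage, mem_Iic, mem_setOf_eq]
    have : f x ≤ y ↔ g x ≤ t := by
      rw [hf]
      exact (quant_le_iff Q (hg0 x) (hg1 x)).trans (by rw [ht])
    rw [this]
    constructor
    · intro h
      rw [ht', le_div_iff₀ h1τ]
      simp only [hg] at h
      nlinarith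
    · intro h
      rw [ht', le_div_iff₀ h1τ] at h
      simp only [hg]
      nlinarith
  rw [hmap]
  by_cases hc1 : t' < 0
  · have hempty : {x | hfun P x ≤ t'} = (∅ : Set ℝ) := by
      ext x
      simp only [mem_setOf_eq, mem_empty_iff_false, iff_false, not_le]
      exact lt_of_lt_of_le hc1 (hfun_nonneg P x)
    rw [hempty]
    simp only [measure_empty, ENNReal.toReal_zero]
    have htτ : t < τ/2 := by nlinarith
    rw [abs_le]
    constructor <;> linarith
  push_neg at hc1
  by_cases hc2 : 1 < t'
  · have huniv : {x | hfun P x ≤ t'} = (univ : Set ℝ) := by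
      ext x
      simp only [mem_setOf_eq, mem_univ, iff_true]
      exact le_trans (hfun_le_one P x) hc2.le
    rw [huniv, measure_univ]
    simp only [ENNReal.toReal_one]
    have htτ : 1 - τ/2 < t := by nlinarith
    rw [abs_le]
    constructor <;> linarith
  push_neg at hc2
  have hku := key_upper P hc1
  have hkl := key_lower P hc2
  rw [← hM] at hku hkl
  have hd1 : t' - t ≤ τ/2 := by nlinarith
  have hd2 : t - t' ≤ τ/2 := by nlinarith
  rw [abs_le]
  constructor <;> linarith

end KSaux

/-- For a discontinuous seed `P` (having an atom) and an atomless target `Q`, the optimal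
KS approximation error over all measurable simulators equals half the largest atom mass. -/
theorem optimal_ks_error_discontinuous_seed (P Q : Measure ℝ)
    [IsProbabilityMeasure P] [IsProbabilityMeasure Q] [NullSingletonClass Q]
    (hatom : ∃ x : ℝ, 0 < P {x}) :
    (⨅ f : {f : ℝ → ℝ // Measurable f}, KSdist (P.map f) Q)
      = (1 / 2) * ⨆ x : ℝ, (P {x}).toReal := by
  classical
  set M := ⨆ x : ℝ, (P {x}).toReal with hM
  have hM0 : 0 ≤ M := KSaux.iSup_jump_nonneg P
  apply le_antisymm
  · apply le_of_forall_pos_le_add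
    intro ε hε
    set τ := min ε (1/2) with hτ
    have hτ0 : 0 < τ := lt_min hε (by norm_num)
    have hτ12 : τ ≤ 1/2 := min_le_right _ _
    obtain ⟨f, hfm, hKS⟩ := KSaux.upper P Q hτ0 hτ12
    have hbb : BddBelow (range fun f : {f : ℝ → ℝ // Measurable f} => KSdist (P.map ↑f) Q) := by
      refine ⟨0, ?_⟩
      rintro _ ⟨g, rfl⟩
      exact Real.iSup_nonneg fun x => abs_nonneg _
    have h1 : (⨅ f : {f : ℝ → ℝ // Measurable f}, KSdist (P.map ↑f) Q)
        ≤ KSdist (P.map f) Q := ciInf_le hbb ⟨f, hfm⟩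
    have h2 := min_le_left ε (1/2)
    rw [← hM] at hKS
    linarith
  · haveI : Nonempty {f : ℝ → ℝ // Measurable f} := ⟨⟨id, measurable_id⟩⟩
    apply le_ciInf
    intro f
    haveI : IsProbabilityMeasure (P.map f.1) := Measure.isProbabilityMeasure_map f.2.aemeasurable
    have key : ∀ x₀ : ℝ, (P {x₀}).toReal ≤ 2 * KSdist (P.map f.1) Q := by
      intro x₀
      apply le_of_forall_pos_le_add
      intro ε hε
      set y := f.1 x₀ with hy
      obtain ⟨y', hy', hQ⟩ := KSaux.exists_Ioc_small (μ := Q) y hε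
      have hbdd : BddAbove (range fun x => |cdfR (P.map f.1) x - cdfR Q x|) := by
        refine ⟨2, ?_⟩
        rintro _ ⟨x, rfl⟩
        have h1 : 0 ≤ cdfR (P.map f.1) x := ENNReal.toReal_nonneg
        have h2 := KSaux.cdfR_le_one' (P.map f.1) x
        have h3 : 0 ≤ cdfR Q x := ENNReal.toReal_nonneg
        have h4 := KSaux.cdfR_le_one' Q x
        rw [abs_le]
        constructor <;> linarith
      have hKy : |cdfR (P.map f.1) y - cdfR Q y| ≤ KSdist (P.map f.1) Q := le_ciSup hbdd y
      have hKy' : |cdfR (P.map f.1) y' - cdfR Q y'| ≤ KSdist (P.map f.1) Q := le_ciSup hbdd y'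
      have hdμ : cdfR (P.map f.1) y - cdfR (P.map f.1) y' = ((P.map f.1) (Ioc y' y)).toReal :=
        KSaux.cdfR_diff hy'.le
      have hdQ : cdfR Q y - cdfR Q y' = (Q (Ioc y' y)).toReal := KSaux.cdfR_diff hy'.le
      have hatomy : (P {x₀}).toReal ≤ ((P.map f.1) (Ioc y' y)).toReal := by
        apply ENNReal.toReal_mono (measure_ne_top _ _)
        rw [Measure.map_apply f.2 measurableSet_Ioc]
        apply measure_mono
        intro z hz
        rw [mem_singleton_iff] at hz
        subst hz
        simp only [mem_preimage, mem_Ioc, ← hy]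
        exact ⟨hy', le_rfl⟩
      linarith [le_abs_self (cdfR (P.map f.1) y - cdfR Q y),
        neg_abs_le (cdfR (P.map f.1) y' - cdfR Q y')]
    have hfin : M ≤ 2 * KSdist (P.map f.1) Q := by
      rw [hM]
      exact ciSup_le key
    linarith
end

section
/- Sawtooth pushforward identity: Let Q_Y be a Borel probability measure on ℝ with CDF G, let Δ > 0, and define f_Δ : ℝ → ℝ by f_Δ(x) = G^{-1}((x − iΔ)/Δ) for x ∈ (iΔ, (i+1)Δ], i ∈ ℤ, where G^{-1} is the quantile function. Let P̂ be any probability measure on ℝ whose density is constant on each interval (iΔ, (i+1)Δ] (i.e., the piecewise-uniform averaging of some density p). Then the pushforward of P̂ under f_Δ equals Q_Y exactly. -/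
open MeasureTheory Set Filter Topology

noncomputable def quantile (ν : Measure ℝ) (t : ℝ) : ℝ := sInf {y : ℝ | t ≤ cdfR ν y}

/-- The sawtooth simulator: on each interval `(iΔ, (i+1)Δ]` (where `i = ⌈x/Δ⌉ - 1`),
map `x` to `G⁻¹((x - iΔ)/Δ)`. -/
noncomputable def sawtooth (ν : Measure ℝ) (Δ : ℝ) (x : ℝ) : ℝ :=
  quantile ν ((x - ((⌈x / Δ⌉ : ℝ) - 1) * Δ) / Δ)

/-- The piecewise average of a density `p` over the intervals `(iΔ, (i+1)Δ]`. -/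
noncomputable def pieceAvg (p : ℝ → ℝ) (Δ : ℝ) (x : ℝ) : ℝ :=
  (1 / Δ) * ∫ t in Set.Ioc ((((⌈x / Δ⌉ : ℝ) - 1) * Δ)) (((⌈x / Δ⌉ : ℝ)) * Δ), p t

section CdfQuantile

variable {ν : Measure ℝ} [IsProbabilityMeasure ν]

lemma cdfR_eq_cdf (ν : Measure ℝ) [IsProbabilityMeasure ν] :
    cdfR ν = ⇑(ProbabilityTheory.cdf ν) :=
  funext fun x => (ProbabilityTheory.cdf_eq_real ν x).symm

lemma cdfR_nonneg (ν : Measure ℝ) (x : ℝ) : 0 ≤ cdfR ν x := ENNReal.toReal_nonneg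

lemma cdfR_le_one (x : ℝ) : cdfR ν x ≤ 1 := by
  rw [cdfR_eq_cdf]; exact ProbabilityTheory.cdf_le_one ν x

lemma cdfR_mono : Monotone (cdfR ν) := by
  rw [cdfR_eq_cdf]; exact (ProbabilityTheory.cdf ν).mono

lemma bddBelow_quantileSet {t : ℝ} (ht : 0 < t) : BddBelow {y : ℝ | t ≤ cdfR ν y} := by
  obtain ⟨z, hz⟩ : ∃ z, cdfR ν z < t := by
    have h := (ProbabilityTheory.tendsto_cdf_atBot ν).eventually_lt_const ht
    obtain ⟨z, hz⟩ := h.exists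
    exact ⟨z, by rwa [cdfR_eq_cdf]⟩
  refine ⟨z, fun w hw => ?_⟩
  by_contra hwz
  exact absurd ((cdfR_mono (le_of_not_ge hwz)).trans_lt hz) (not_lt.mpr hw)

lemma nonempty_quantileSet {t : ℝ} (ht : t < 1) : {y : ℝ | t ≤ cdfR ν y}.Nonempty := by
  have h := (ProbabilityTheory.tendsto_cdf_atTop ν).eventually_const_lt ht
  obtain ⟨z, hz⟩ := h.exists
  exact ⟨z, by rw [mem_setOf_eq, cdfR_eq_cdf]; exact hz.le⟩

lemma quantile_le_of_le_cdfR {t y : ℝ} (ht : 0 < t) (h : t ≤ cdfR ν y) :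
    quantile ν t ≤ y :=
  csInf_le (bddBelow_quantileSet ht) h

lemma le_cdfR_quantile {t : ℝ} (ht0 : 0 < t) (ht1 : t < 1) :
    t ≤ cdfR ν (quantile ν t) := by
  set S := {y : ℝ | t ≤ cdfR ν y} with hS
  have hbdd : BddBelow S := bddBelow_quantileSet ht0
  have hne : S.Nonempty := nonempty_quantileSet ht1
  have key : ∀ z, sInf S < z → t ≤ cdfR ν z := by
    intro z hz
    obtain ⟨w, hwS, hwz⟩ := (csInf_lt_iff hbdd hne).mp hz
    exact hwS.trans (cdfR_mono hwz.le)
  have hcont : Tendsto (cdfR ν) (𝓝[>] (sInf S)) (𝓝 (cdfR ν (sInf S))) := by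
    rw [cdfR_eq_cdf]
    exact ((ProbabilityTheory.cdf ν).right_continuous (sInf S)).tendsto.mono_left
      (nhdsWithin_mono _ Ioi_subset_Ici_self)
  exact ge_of_tendsto hcont (eventually_nhdsWithin_of_forall fun z hz => key z hz)

lemma le_cdfR_of_quantile_le {t y : ℝ} (ht0 : 0 < t) (ht1 : t < 1)
    (h : quantile ν t ≤ y) : t ≤ cdfR ν y :=
  (le_cdfR_quantile ht0 ht1).trans (cdfR_mono h)

lemma quantile_nonpos {t : ℝ} (ht : t ≤ 0) : quantile ν t = 0 := by
  have hset : {y : ℝ | t ≤ cdfR ν y} = univ :=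
    eq_univ_of_forall fun y => ht.trans (cdfR_nonneg ν y)
  rw [quantile, hset]
  apply Real.sInf_of_not_bddBelow
  rintro ⟨x, hx⟩
  exact absurd (hx (mem_univ (x - 1))) (by norm_num)

lemma quantile_gt_one {t : ℝ} (ht : 1 < t) : quantile ν t = 0 := by
  have hset : {y : ℝ | t ≤ cdfR ν y} = ∅ := by
    apply eq_empty_of_forall_notMem
    intro y hy
    exact absurd ((cdfR_le_one (ν := ν) y).trans_lt ht) (not_lt.mpr hy)
  rw [quantile, hset, Real.sInf_empty]

lemma quantile_monotoneOn : MonotoneOn (quantile ν) (Ioo (0:ℝ) 1) := by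
  intro a ha b hb hab
  exact csInf_le_csInf (bddBelow_quantileSet ha.1) (nonempty_quantileSet hb.2)
    (fun y hy => hab.trans hy)

lemma measurable_quantile (ν : Measure ℝ) [IsProbabilityMeasure ν] :
    Measurable (quantile ν) := by
  apply measurable_of_Iic
  intro c
  set P := quantile ν ⁻¹' Iic c with hP
  have hdecomp : P = (P ∩ Ioo 0 1) ∪ ((P ∩ Iic 0) ∪ ((P ∩ {1}) ∪ (P ∩ Ioi 1))) := by
    apply Subset.antisymm
    · intro t ht
      rcases le_or_gt t 0 with h0 | h0
      · exact Or.inr (Or.inl ⟨ht, h0⟩)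
      rcases lt_trichotomy t 1 with h1 | h1 | h1
      · exact Or.inl ⟨ht, h0, h1⟩
      · exact Or.inr (Or.inr (Or.inl ⟨ht, h1⟩))
      · exact Or.inr (Or.inr (Or.inr ⟨ht, h1⟩))
    · intro t ht
      rcases ht with h | h | h | h <;> exact h.1
  rw [hdecomp]
  have hA : MeasurableSet (P ∩ Ioo 0 1) := by
    apply Set.OrdConnected.measurableSet
    constructor
    intro a ha b hb x hx
    have hx01 : x ∈ Ioo (0:ℝ) 1 := ⟨ha.2.1.trans_le hx.1, lt_of_le_of_lt hx.2 hb.2.2⟩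
    refine ⟨?_, hx01⟩
    have := quantile_monotoneOn (ν := ν) hx01 hb.2 hx.2
    exact this.trans hb.1
  have hB : MeasurableSet (P ∩ Iic 0) := by
    by_cases hc : (0:ℝ) ≤ c
    · have : P ∩ Iic 0 = Iic 0 := by
        apply Subset.antisymm inter_subset_right
        intro t ht
        exact ⟨by simp [hP, quantile_nonpos (ν := ν) ht, hc], ht⟩
      rw [this]; exact measurableSet_Iic
    · have : P ∩ Iic 0 = ∅ := by
        apply eq_empty_of_forall_notMem
        rintro t ⟨htP, ht0⟩
        rw [hP, mem_preimage, quantile_nonpos (ν := ν) ht0] at htP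
        exact hc htP
      rw [this]; exact MeasurableSet.empty
  have hC : MeasurableSet (P ∩ {1}) :=
    (Set.Subsingleton.inter_singleton (s := P) (a := (1:ℝ))).measurableSet
  have hD : MeasurableSet (P ∩ Ioi 1) := by
    by_cases hc : (0:ℝ) ≤ c
    · have : P ∩ Ioi 1 = Ioi 1 := by
        apply Subset.antisymm inter_subset_right
        intro t ht
        exact ⟨by simp [hP, quantile_gt_one (ν := ν) ht, hc], ht⟩
      rw [this]; exact measurableSet_Ioi
    · have : P ∩ Ioi 1 = ∅ := by
        apply eq_empty_of_forall_notMem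
        rintro t ⟨htP, ht1⟩
        rw [hP, mem_preimage, quantile_gt_one (ν := ν) ht1] at htP
        exact hc htP
      rw [this]; exact MeasurableSet.empty
  exact hA.union (hB.union (hC.union hD))

end CdfQuantile

section Intervals

variable {Δ : ℝ}

lemma ceil_eq_of_mem (hΔ : 0 < Δ) {i : ℤ} {x : ℝ}
    (hx : x ∈ Ioc ((i:ℝ) * Δ) (((i:ℝ) + 1) * Δ)) : ⌈x / Δ⌉ = i + 1 := by
  rw [Int.ceil_eq_iff]
  constructor
  · push_cast
    rw [lt_div_iff₀ hΔ]
    simpa using hx.1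
  · push_cast
    rw [div_le_iff₀ hΔ]
    exact hx.2

lemma iUnion_Ioc_eq_univ (hΔ : 0 < Δ) :
    (⋃ i : ℤ, Ioc ((i:ℝ) * Δ) (((i:ℝ) + 1) * Δ)) = univ := by
  ext x
  simp only [mem_iUnion, mem_univ, iff_true]
  refine ⟨⌈x / Δ⌉ - 1, ?_, ?_⟩
  · push_cast
    rw [← lt_div_iff₀ hΔ]
    have := Int.ceil_lt_add_one (x / Δ)
    linarith
  · push_cast
    rw [← div_le_iff₀ hΔ]
    have := Int.le_ceil (x / Δ)
    push_cast
    linarith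

lemma pairwise_disjoint_Ioc (hΔ : 0 < Δ) :
    Pairwise (Function.onFun Disjoint fun i : ℤ => Ioc ((i:ℝ) * Δ) (((i:ℝ) + 1) * Δ)) := by
  intro i j hij
  rw [Function.onFun, Set.Ioc_disjoint_Ioc]
  rcases lt_or_gt_of_ne hij with h | h
  · have h' : (i:ℝ) + 1 ≤ j := by exact_mod_cast h
    refine (min_le_left _ _).trans ?_
    exact le_max_of_le_right (mul_le_mul_of_nonneg_right h' hΔ.le)
  · have h' : (j:ℝ) + 1 ≤ i := by exact_mod_cast h
    refine (min_le_right _ _).trans ?_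
    exact le_max_of_le_left (mul_le_mul_of_nonneg_right h' hΔ.le)

end Intervals

section Density

variable {Δ : ℝ} {p : ℝ → ℝ}

lemma tsum_lintegral_eq_one (hΔ : 0 < Δ) (hp0 : ∀ x, 0 ≤ p x) (hp1 : Integrable p)
    (hp2 : ∫ x, p x = 1) :
    (∑' i : ℤ, ∫⁻ t in Ioc ((i:ℝ) * Δ) (((i:ℝ) + 1) * Δ), ENNReal.ofReal (p t)) = 1 := by
  rw [← lintegral_iUnion (fun _ => measurableSet_Ioc) (pairwise_disjoint_Ioc hΔ),
    iUnion_Ioc_eq_univ hΔ, Measure.restrict_univ,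
    ← ofReal_integral_eq_lintegral_ofReal hp1 (ae_of_all _ hp0), hp2, ENNReal.ofReal_one]

lemma pieceAvg_eq_of_mem (hΔ : 0 < Δ) {i : ℤ} {x : ℝ}
    (hx : x ∈ Ioc ((i:ℝ) * Δ) (((i:ℝ) + 1) * Δ)) :
    pieceAvg p Δ x = (1 / Δ) * ∫ t in Ioc ((i:ℝ) * Δ) (((i:ℝ) + 1) * Δ), p t := by
  have h1 : ((⌈x / Δ⌉ : ℝ) - 1) = (i:ℝ) := by
    rw [ceil_eq_of_mem hΔ hx]; push_cast; ring
  have h2 : ((⌈x / Δ⌉ : ℝ)) = (i:ℝ) + 1 := by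
    rw [ceil_eq_of_mem hΔ hx]; push_cast; ring
  rw [pieceAvg, h1, h2]

lemma withDensity_pieceAvg_apply (hΔ : 0 < Δ) (hp0 : ∀ x, 0 ≤ p x) (hp1 : Integrable p)
    (hp2 : ∫ x, p x = 1) (P : Set ℝ) (hP : MeasurableSet P) (r : ℝ)
    (hvol : ∀ i : ℤ, volume (P ∩ Ioc ((i:ℝ) * Δ) (((i:ℝ) + 1) * Δ)) = ENNReal.ofReal (r * Δ)) :
    volume.withDensity (fun x => ENNReal.ofReal (pieceAvg p Δ x)) P = ENNReal.ofReal r := by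
  rw [withDensity_apply _ hP]
  have hPu : P = ⋃ i : ℤ, P ∩ Ioc ((i:ℝ) * Δ) (((i:ℝ) + 1) * Δ) := by
    rw [← inter_iUnion, iUnion_Ioc_eq_univ hΔ, inter_univ]
  have hdisj : Pairwise (Function.onFun Disjoint
      fun i : ℤ => P ∩ Ioc ((i:ℝ) * Δ) (((i:ℝ) + 1) * Δ)) :=
    fun i j hij => ((pairwise_disjoint_Ioc hΔ hij).mono inter_subset_right inter_subset_right)
  calc ∫⁻ x in P, ENNReal.ofReal (pieceAvg p Δ x)
      = ∫⁻ x in ⋃ i : ℤ, P ∩ Ioc ((i:ℝ) * Δ) (((i:ℝ) + 1) * Δ),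
          ENNReal.ofReal (pieceAvg p Δ x) := by rw [← hPu]
    _ = ∑' i : ℤ, ∫⁻ x in P ∩ Ioc ((i:ℝ) * Δ) (((i:ℝ) + 1) * Δ),
          ENNReal.ofReal (pieceAvg p Δ x) :=
        lintegral_iUnion (fun _ => hP.inter measurableSet_Ioc) hdisj _
    _ = ∑' i : ℤ, ENNReal.ofReal ((1 / Δ) * ∫ t in Ioc ((i:ℝ) * Δ) (((i:ℝ) + 1) * Δ), p t)
          * ENNReal.ofReal (r * Δ) := by
        refine tsum_congr fun i => ?_
        rw [setLIntegral_congr_fun_ae (hP.inter measurableSet_Ioc)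
          (ae_of_all _ (fun x hx => by rw [pieceAvg_eq_of_mem hΔ hx.2])),
          setLIntegral_const, hvol i]
    _ = ENNReal.ofReal (1 / Δ)
          * (∑' i : ℤ, ∫⁻ t in Ioc ((i:ℝ) * Δ) (((i:ℝ) + 1) * Δ), ENNReal.ofReal (p t))
          * ENNReal.ofReal (r * Δ) := by
        rw [ENNReal.tsum_mul_right]
        congr 1
        rw [← ENNReal.tsum_mul_left]
        refine tsum_congr fun i => ?_
        rw [ENNReal.ofReal_mul (by positivity),
          ofReal_integral_eq_lintegral_ofReal hp1.restrict (ae_of_all _ hp0)]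
    _ = ENNReal.ofReal r := by
        rw [tsum_lintegral_eq_one hΔ hp0 hp1 hp2, mul_one,
          ← ENNReal.ofReal_mul (by positivity)]
        congr 1
        field_simp
end Density

/-- Pushing the piecewise-uniform averaging `P̂` of any density through the sawtooth
map yields exactly the target distribution `Q`. -/
theorem sawtooth_pushforward_exact (Q : Measure ℝ) [IsProbabilityMeasure Q]
    (Δ : ℝ) (hΔ : 0 < Δ) (p : ℝ → ℝ) (hp0 : ∀ x, 0 ≤ p x) (hp1 : Integrable p)
    (hp2 : ∫ x, p x = 1)
    (Phat : Measure ℝ)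
    (hPhat : Phat = volume.withDensity (fun x => ENNReal.ofReal (pieceAvg p Δ x))) :
    Phat.map (sawtooth Q Δ) = Q := by
  subst hPhat
  -- measurability of the sawtooth map
  have hg : Measurable (fun x : ℝ => (x - ((⌈x / Δ⌉ : ℝ) - 1) * Δ) / Δ) := by
    have hc : Measurable (fun x : ℝ => ((⌈x / Δ⌉ : ℤ) : ℝ)) :=
      measurable_from_top.comp (Int.measurable_ceil.comp (measurable_id.div_const Δ))
    exact ((measurable_id.sub ((hc.sub_const 1).mul_const Δ)).div_const Δ)
  have hmeasF : Measurable (sawtooth Q Δ) := (measurable_quantile Q).comp hg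
  -- sawtooth rewriting on intervals
  have hsaw : ∀ (i : ℤ) (x : ℝ), x ∈ Ioc ((i:ℝ) * Δ) (((i:ℝ) + 1) * Δ) →
      sawtooth Q Δ x = quantile Q ((x - (i:ℝ) * Δ) / Δ) := by
    intro i x hx
    have h1 : ((⌈x / Δ⌉ : ℝ) - 1) = (i:ℝ) := by
      rw [ceil_eq_of_mem hΔ hx]; push_cast; ring
    rw [sawtooth, h1]
  -- key interval volume computation for preimages of Iic
  have hvolIic : ∀ (y : ℝ) (i : ℤ),
      volume (sawtooth Q Δ ⁻¹' Iic y ∩ Ioc ((i:ℝ) * Δ) (((i:ℝ) + 1) * Δ))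
        = ENNReal.ofReal (cdfR Q y * Δ) := by
    intro y i
    set T := cdfR Q y with hT
    have hT0 : 0 ≤ T := cdfR_nonneg Q y
    have hT1 : T ≤ 1 := cdfR_le_one (ν := Q) y
    have hsub1 : Ioo ((i:ℝ) * Δ) ((i:ℝ) * Δ + T * Δ) ⊆
        sawtooth Q Δ ⁻¹' Iic y ∩ Ioc ((i:ℝ) * Δ) (((i:ℝ) + 1) * Δ) := by
      intro x hx
      have hxI : x ∈ Ioc ((i:ℝ) * Δ) (((i:ℝ) + 1) * Δ) := by
        refine ⟨hx.1, ?_⟩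
        have h1 : T * Δ ≤ Δ := by nlinarith
        nlinarith [hx.1, hx.2]
      refine ⟨?_, hxI⟩
      rw [mem_preimage, mem_Iic, hsaw i x hxI]
      have ht0 : 0 < (x - (i:ℝ) * Δ) / Δ := div_pos (by linarith [hx.1]) hΔ
      have htT : (x - (i:ℝ) * Δ) / Δ < T := by
        rw [div_lt_iff₀ hΔ]
        linarith [hx.2]
      exact quantile_le_of_le_cdfR ht0 (by rw [← hT]; exact htT.le)
    have hsub2 : sawtooth Q Δ ⁻¹' Iic y ∩ Ioc ((i:ℝ) * Δ) (((i:ℝ) + 1) * Δ) ⊆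
        Ioc ((i:ℝ) * Δ) ((i:ℝ) * Δ + T * Δ) ∪ {((i:ℝ) + 1) * Δ} := by
      rintro x ⟨hxP, hxI⟩
      by_cases hx1 : x = ((i:ℝ) + 1) * Δ
      · exact Or.inr hx1
      · left
        have hxlt : x < ((i:ℝ) + 1) * Δ := lt_of_le_of_ne hxI.2 hx1
        have ht0 : 0 < (x - (i:ℝ) * Δ) / Δ := div_pos (by linarith [hxI.1]) hΔ
        have ht1 : (x - (i:ℝ) * Δ) / Δ < 1 := by
          rw [div_lt_one hΔ]; nlinarith
        rw [mem_preimage, mem_Iic, hsaw i x hxI] at hxP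
        have htT : (x - (i:ℝ) * Δ) / Δ ≤ T := le_cdfR_of_quantile_le ht0 ht1 hxP
        rw [div_le_iff₀ hΔ] at htT
        exact ⟨hxI.1, by linarith⟩
    apply le_antisymm
    · calc volume (sawtooth Q Δ ⁻¹' Iic y ∩ Ioc ((i:ℝ) * Δ) (((i:ℝ) + 1) * Δ))
          ≤ volume (Ioc ((i:ℝ) * Δ) ((i:ℝ) * Δ + T * Δ) ∪ {((i:ℝ) + 1) * Δ}) :=
            measure_mono hsub2
        _ ≤ volume (Ioc ((i:ℝ) * Δ) ((i:ℝ) * Δ + T * Δ)) + volume ({((i:ℝ) + 1) * Δ} : Set ℝ) :=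
            measure_union_le _ _
        _ = ENNReal.ofReal (T * Δ) := by
            rw [Real.volume_Ioc, Real.volume_singleton, add_zero]
            congr 1
            ring
    · calc ENNReal.ofReal (T * Δ)
          = volume (Ioo ((i:ℝ) * Δ) ((i:ℝ) * Δ + T * Δ)) := by
            rw [Real.volume_Ioo]
            congr 1
            ring
        _ ≤ volume (sawtooth Q Δ ⁻¹' Iic y ∩ Ioc ((i:ℝ) * Δ) (((i:ℝ) + 1) * Δ)) :=
            measure_mono hsub1
  -- the pushforward is a probability measure
  have huniv : (volume.withDensity (fun x => ENNReal.ofReal (pieceAvg p Δ x))) univ = 1 := by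
    have := withDensity_pieceAvg_apply hΔ hp0 hp1 hp2 univ MeasurableSet.univ 1
      (fun i => by rw [univ_inter, Real.volume_Ioc, one_mul]; congr 1; ring)
    rwa [ENNReal.ofReal_one] at this
  haveI : IsProbabilityMeasure
      (volume.withDensity (fun x => ENNReal.ofReal (pieceAvg p Δ x))) := ⟨huniv⟩
  haveI : IsFiniteMeasure
      ((volume.withDensity (fun x => ENNReal.ofReal (pieceAvg p Δ x))).map (sawtooth Q Δ)) := by
    constructor
    rw [Measure.map_apply hmeasF MeasurableSet.univ, preimage_univ, huniv]
    exact ENNReal.one_lt_top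
  apply Measure.ext_of_Iic
  intro y
  rw [Measure.map_apply hmeasF measurableSet_Iic]
  rw [withDensity_pieceAvg_apply hΔ hp0 hp1 hp2 _ (hmeasF measurableSet_Iic)
    (cdfR Q y) (hvolIic y)]
  rw [cdfR, ENNReal.ofReal_toReal (measure_ne_top Q _)]
end

section
/- Universal simulation by sawtooth maps: Let Q_Y be any Borel probability measure on ℝ with quantile function G^{-1}, and for Δ > 0 define f_Δ(x) = Σ_{i∈ℤ} G^{-1}((x − iΔ)/Δ)·1{x ∈ (iΔ, (i+1)Δ]}. Then for every absolutely continuous Borel probability measure P_X on ℝ, |(f_Δ)_*P_X − Q_Y|_TV → 0 as Δ → 0. -/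
open MeasureTheory Set Filter

noncomputable def TVdist {α : Type*} [MeasurableSpace α] (μ ν : Measure α) : ℝ :=
  ⨆ A : {s : Set α // MeasurableSet s}, |(μ A).toReal - (ν A).toReal|

open scoped ENNReal Topology

namespace Sawtooth

variable (Q : Measure ℝ) [IsProbabilityMeasure Q]

lemma cdfR_eq (y : ℝ) : cdfR Q y = ProbabilityTheory.cdf Q y :=
  (ProbabilityTheory.cdf_eq_real Q y).symm

lemma cdfR_mono : Monotone (cdfR Q) := by
  intro a b hab
  rw [cdfR_eq, cdfR_eq]
  exact ProbabilityTheory.monotone_cdf Q hab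

lemma S_nonempty {t : ℝ} (ht1 : t < 1) : {y : ℝ | t ≤ cdfR Q y}.Nonempty := by
  have h := (ProbabilityTheory.tendsto_cdf_atTop Q).eventually_const_le ht1
  rcases h.exists with ⟨y, hy⟩
  exact ⟨y, by rw [mem_setOf_eq, cdfR_eq]; exact hy⟩

lemma S_bddBelow {t : ℝ} (ht0 : 0 < t) : BddBelow {y : ℝ | t ≤ cdfR Q y} := by
  have h := (ProbabilityTheory.tendsto_cdf_atBot Q).eventually_lt_const ht0
  rcases eventually_atBot.1 h with ⟨y₀, hy₀⟩
  refine ⟨y₀, fun y hy => ?_⟩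
  by_contra hlt
  push_neg at hlt
  have : cdfR Q y < t := by rw [cdfR_eq]; exact hy₀ y hlt.le
  exact absurd hy (not_le.2 this)

lemma quantile_le_iff {t y : ℝ} (ht0 : 0 < t) (ht1 : t < 1) :
    quantile Q t ≤ y ↔ t ≤ cdfR Q y := by
  constructor
  · intro h
    have h2 : ∀ z, y < z → t ≤ cdfR Q z := by
      intro z hz
      have hlt : sInf {y : ℝ | t ≤ cdfR Q y} < z := lt_of_le_of_lt h hz
      rcases (csInf_lt_iff (S_bddBelow Q ht0) (S_nonempty Q ht1)).1 hlt with ⟨s, hs, hsz⟩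
      exact le_trans hs (cdfR_mono Q hsz.le)
    have hrc : ContinuousWithinAt (ProbabilityTheory.cdf Q) (Ioi y) y :=
      ((ProbabilityTheory.cdf Q).right_continuous y).mono Ioi_subset_Ici_self
    have := ge_of_tendsto hrc (eventually_mem_nhdsWithin.mono fun z hz => by
      rw [← cdfR_eq]; exact h2 z hz)
    rwa [cdfR_eq]
  · intro h
    exact csInf_le (S_bddBelow Q ht0) h

lemma quantile_mono_on {t₁ t₂ : ℝ} (h0 : 0 < t₁) (h12 : t₁ ≤ t₂) (h1 : t₂ < 1) :
    quantile Q t₁ ≤ quantile Q t₂ :=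
  csInf_le_csInf (S_bddBelow Q h0) (S_nonempty Q h1) (fun y hy => le_trans h12 hy)

/-- Measurable representative of the quantile function on `(0,1)`. -/
noncomputable def qm (t : ℝ) : ℝ := if t ∈ Ioo (0:ℝ) 1 then quantile Q t else 0

lemma qn_aux (n : ℕ) : (0:ℝ) < 1/(n+2) ∧ (1:ℝ)/(n+2) ≤ 1 - 1/(n+2) ∧ (1:ℝ) - 1/(n+2) < 1 := by
  have h2 : (0:ℝ) < (n:ℝ) + 2 := by positivity
  refine ⟨by positivity, ?_, ?_⟩
  · rw [le_sub_iff_add_le]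
    rw [← add_div, div_le_one h2]
    norm_num
  · have : (0:ℝ) < 1/(n+2) := by positivity
    linarith

noncomputable def qn (n : ℕ) (t : ℝ) : ℝ :=
  quantile Q (max (1/(n+2)) (min t (1 - 1/(n+2))))

lemma qn_mono (n : ℕ) : Monotone (qn Q n) := by
  intro t₁ t₂ h
  obtain ⟨ha, hab, hb⟩ := qn_aux n
  apply quantile_mono_on Q
  · exact lt_max_iff.2 (Or.inl ha)
  · exact max_le_max le_rfl (min_le_min h le_rfl)
  · exact lt_of_le_of_lt (max_le hab (min_le_right _ _)) hb

lemma qm_measurable : Measurable (qm Q) := by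
  have hqn : ∀ n : ℕ, Measurable (fun t => if t ∈ Ioo (0:ℝ) 1 then qn Q n t else 0) := by
    intro n
    exact Measurable.ite measurableSet_Ioo (qn_mono Q n).measurable measurable_const
  apply measurable_of_tendsto_metrizable hqn
  rw [tendsto_pi_nhds]
  intro t
  by_cases ht : t ∈ Ioo (0:ℝ) 1
  · obtain ⟨ht0, ht1⟩ := ht
    obtain ⟨n₀, hn₀⟩ := exists_nat_one_div_lt (show (0:ℝ) < min t (1 - t) by
      simp only [lt_min_iff]; constructor <;> linarith)
    apply tendsto_atTop_of_eventually_const (i₀ := n₀)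
    intro n hn
    have hle : (1:ℝ)/(n+2) ≤ 1/(n₀+1) := by
      apply one_div_le_one_div_of_le (by positivity)
      have : (n₀:ℝ) ≤ n := Nat.cast_le.mpr hn
      linarith
    have h1 : (1:ℝ)/(n+2) ≤ t := le_trans (le_trans hle hn₀.le) (min_le_left _ _)
    have h2 : t ≤ 1 - 1/(n+2) := by
      have : (1:ℝ)/(n+2) ≤ 1 - t := le_trans (le_trans hle hn₀.le) (min_le_right _ _)
      linarith
    have hclamp : max ((1:ℝ)/(n+2)) (min t (1 - 1/(n+2))) = t := by
      rw [min_eq_left h2, max_eq_right h1]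
    simp only [if_pos (show t ∈ Ioo (0:ℝ) 1 from ⟨ht0, ht1⟩), qm, qn, hclamp]
  · have heq : (fun n : ℕ => if t ∈ Ioo (0:ℝ) 1 then qn Q n t else 0) = fun _ => (0:ℝ) := by
      funext n; rw [if_neg ht]
    rw [heq, qm, if_neg ht]
    exact tendsto_const_nhds

instance : IsProbabilityMeasure (volume.restrict (Ioo (0:ℝ) 1)) :=
  ⟨by simp [Real.volume_Ioo]⟩

lemma map_qm : (volume.restrict (Ioo (0:ℝ) 1)).map (qm Q) = Q := by
  have hmeas := qm_measurable Q
  have : IsProbabilityMeasure ((volume.restrict (Ioo (0:ℝ) 1)).map (qm Q)) :=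
    Measure.isProbabilityMeasure_map hmeas.aemeasurable
  refine Measure.ext_of_Iic _ _ (fun y => ?_)
  rw [Measure.map_apply hmeas measurableSet_Iic,
    Measure.restrict_apply (hmeas measurableSet_Iic)]
  have hc0 : 0 ≤ cdfR Q y := ENNReal.toReal_nonneg
  have hc1 : cdfR Q y ≤ 1 := by rw [cdfR_eq]; exact ProbabilityTheory.cdf_le_one Q y
  have hQ : Q (Iic y) = ENNReal.ofReal (cdfR Q y) := by
    rw [cdfR]; exact (ENNReal.ofReal_toReal (measure_ne_top Q _)).symm
  have hset : qm Q ⁻¹' (Iic y) ∩ Ioo 0 1 = Ioo (0:ℝ) 1 ∩ Iic (cdfR Q y) := by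
    ext t
    simp only [mem_inter_iff, mem_preimage, mem_Iic, qm]
    constructor
    · rintro ⟨hq, ht⟩
      rw [if_pos ht] at hq
      exact ⟨ht, (quantile_le_iff Q ht.1 ht.2).1 hq⟩
    · rintro ⟨ht, hc⟩
      exact ⟨by rw [if_pos ht]; exact (quantile_le_iff Q ht.1 ht.2).2 hc, ht⟩
  rw [hset, hQ]
  rcases lt_or_ge (cdfR Q y) 1 with h | h
  · have : Ioo (0:ℝ) 1 ∩ Iic (cdfR Q y) = Ioc 0 (cdfR Q y) := by
      ext t
      simp only [mem_inter_iff, mem_Ioo, mem_Ioc, mem_Iic]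
      constructor
      · rintro ⟨⟨h1, _⟩, h3⟩; exact ⟨h1, h3⟩
      · rintro ⟨h1, h2⟩; exact ⟨⟨h1, lt_of_le_of_lt h2 h⟩, h2⟩
    rw [this, Real.volume_Ioc, sub_zero]
  · have h1 : cdfR Q y = 1 := le_antisymm hc1 h
    have : Ioo (0:ℝ) 1 ∩ Iic (cdfR Q y) = Ioo 0 1 := by
      apply inter_eq_left.2
      intro t ht
      rw [mem_Iic, h1]
      exact ht.2.le
    rw [this, Real.volume_Ioo, h1]
    norm_num

/-! ### The fractional part map and cells -/

noncomputable def Fd (Δ : ℝ) (x : ℝ) : ℝ := Int.fract (x / Δ)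

lemma Fd_measurable (Δ : ℝ) : Measurable (Fd Δ) :=
  measurable_fract.comp (measurable_id.div_const Δ)

def Ngrid (Δ : ℝ) : Set ℝ := ⋃ i : ℤ, {(i : ℝ) * Δ}

lemma Ngrid_null (Δ : ℝ) : volume (Ngrid Δ) = 0 :=
  measure_iUnion_null (fun i => measure_singleton _)

lemma Fd_mem_Ioo {Δ x : ℝ} (hΔ : 0 < Δ) (hx : x ∉ Ngrid Δ) : Fd Δ x ∈ Ioo (0:ℝ) 1 := by
  refine ⟨?_, Int.fract_lt_one _⟩
  rcases lt_or_eq_of_le (Int.fract_nonneg (x/Δ)) with h | h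
  · exact h
  · exfalso
    apply hx
    have hxd : x / Δ = (⌊x / Δ⌋ : ℝ) := by
      have := h.symm
      rw [← Int.self_sub_floor, sub_eq_zero] at this
      exact this
    have : x = (⌊x / Δ⌋ : ℝ) * Δ := by
      field_simp at hxd
      linarith [hxd]
    exact mem_iUnion.2 ⟨⌊x / Δ⌋, by rw [mem_singleton_iff]; exact this⟩

lemma sawtooth_eq {Δ x : ℝ} (hΔ : 0 < Δ) (hx : x ∉ Ngrid Δ) :
    sawtooth Q Δ x = qm Q (Fd Δ x) := by
  have hmem := Fd_mem_Ioo hΔ hx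
  rw [qm, if_pos hmem]
  unfold sawtooth
  congr 1
  have hne : x / Δ ≠ (⌊x / Δ⌋ : ℝ) := by
    intro h
    apply hx
    have : x = (⌊x / Δ⌋ : ℝ) * Δ := by field_simp at h; linarith [h]
    exact mem_iUnion.2 ⟨⌊x / Δ⌋, by rw [mem_singleton_iff]; exact this⟩
  have hceil : (⌈x / Δ⌉ : ℤ) = ⌊x / Δ⌋ + 1 := by
    rw [Int.ceil_eq_iff]
    constructor
    · push_cast
      have := Int.floor_le (x / Δ)
      have := lt_of_le_of_ne this (Ne.symm hne)
      linarith
    · push_cast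
      exact (Int.lt_floor_add_one (x / Δ)).le
  rw [hceil, Fd, ← Int.self_sub_floor]
  push_cast
  field_simp
  ring

lemma ae_notin_Ngrid (P : Measure ℝ) (hP : P ≪ volume) (Δ : ℝ) :
    ∀ᵐ x ∂P, x ∉ Ngrid Δ :=
  measure_eq_zero_iff_ae_notMem.1 (hP (Ngrid_null Δ))

lemma map_sawtooth (P : Measure ℝ) (hP : P ≪ volume) {Δ : ℝ} (hΔ : 0 < Δ) :
    P.map (sawtooth Q Δ) = P.map (qm Q ∘ Fd Δ) := by
  apply Measure.map_congr
  filter_upwards [ae_notin_Ngrid P hP Δ] with x hx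
  exact sawtooth_eq Q hΔ hx

/-! ### cells and slices -/

def Slice (Δ : ℝ) (i : ℤ) (B : Set ℝ) : Set ℝ := (fun x => x / Δ - (i:ℝ)) ⁻¹' B

noncomputable def cell (Δ : ℝ) (i : ℤ) : Set ℝ := Ico ((i:ℝ)*Δ) (((i:ℝ)+1)*Δ)

lemma Slice_measurableSet {Δ : ℝ} (i : ℤ) {B : Set ℝ} (hB : MeasurableSet B) :
    MeasurableSet (Slice Δ i B) :=
  ((measurable_id.div_const Δ).sub_const _) hB

lemma cell_measurableSet (Δ : ℝ) (i : ℤ) : MeasurableSet (cell Δ i) := measurableSet_Ico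

lemma mem_cell_iff {Δ : ℝ} (hΔ : 0 < Δ) {i : ℤ} {x : ℝ} :
    x ∈ cell Δ i ↔ ⌊x / Δ⌋ = i := by
  rw [cell, mem_Ico, Int.floor_eq_iff]
  constructor
  · rintro ⟨h1, h2⟩
    constructor
    · rwa [le_div_iff₀ hΔ]
    · rw [div_lt_iff₀ hΔ]; push_cast; linarith
  · rintro ⟨h1, h2⟩
    constructor
    · rwa [← le_div_iff₀ hΔ]
    · rw [← div_lt_iff₀ hΔ] at *; push_cast; linarith [h2]

lemma Slice_subset_cell {Δ : ℝ} (hΔ : 0 < Δ) {i : ℤ} {B : Set ℝ} (hB : B ⊆ Ioo 0 1) :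
    Slice Δ i B ⊆ cell Δ i := by
  intro x hx
  have hmem := hB hx
  rw [mem_Ioo] at hmem
  rw [mem_cell_iff hΔ]
  rw [Int.floor_eq_iff]
  constructor
  · linarith [hmem.1]
  · push_cast; linarith [hmem.2]

lemma preimage_Fd {Δ : ℝ} (hΔ : 0 < Δ) {B : Set ℝ} (hB : B ⊆ Ioo 0 1) :
    Fd Δ ⁻¹' B = ⋃ i : ℤ, Slice Δ i B := by
  ext x
  simp only [mem_preimage, mem_iUnion, Fd, Slice]
  constructor
  · intro hx
    exact ⟨⌊x / Δ⌋, hx⟩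
  · rintro ⟨i, hi⟩
    have hfl : ⌊x / Δ⌋ = i := by
      have hmem := hB hi
      rw [mem_Ioo] at hmem
      rw [Int.floor_eq_iff]
      constructor
      · linarith [hmem.1]
      · push_cast; linarith [hmem.2]
    rwa [← Int.self_sub_floor, hfl]

lemma Slice_disjoint {Δ : ℝ} (hΔ : 0 < Δ) {B : Set ℝ} (hB : B ⊆ Ioo 0 1) :
    Pairwise (Function.onFun Disjoint fun i : ℤ => Slice Δ i B) := by
  intro i j hij
  apply Set.disjoint_left.2
  intro x hxi hxj
  apply hij
  have h1 := (Slice_subset_cell hΔ hB hxi)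
  have h2 := (Slice_subset_cell hΔ hB hxj)
  rw [mem_cell_iff hΔ] at h1 h2
  rw [← h1, ← h2]

lemma cell_disjoint {Δ : ℝ} (hΔ : 0 < Δ) :
    Pairwise (Function.onFun Disjoint fun i : ℤ => cell Δ i) := by
  intro i j hij
  apply Set.disjoint_left.2
  intro x hxi hxj
  apply hij
  rw [mem_cell_iff hΔ] at hxi hxj
  rw [← hxi, ← hxj]

lemma iUnion_cell {Δ : ℝ} (hΔ : 0 < Δ) : (⋃ i : ℤ, cell Δ i) = univ := by
  ext x
  simp only [mem_iUnion, mem_univ, iff_true]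
  exact ⟨⌊x / Δ⌋, (mem_cell_iff hΔ).2 rfl⟩

lemma volume_Slice {Δ : ℝ} (hΔ : 0 < Δ) (i : ℤ) (B : Set ℝ) :
    volume (Slice Δ i B) = ENNReal.ofReal Δ * volume B := by
  have hfun : Slice Δ i B = (fun x => Δ⁻¹ * x) ⁻¹' ((fun y => y + (-(i:ℝ))) ⁻¹' B) := by
    ext x
    simp only [Slice, mem_preimage, div_eq_mul_inv, mul_comm, sub_eq_add_neg]
  rw [hfun, Real.volume_preimage_mul_left (inv_ne_zero hΔ.ne'),
    measure_preimage_add_right, inv_inv, abs_of_pos hΔ]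

lemma volume_cell {Δ : ℝ} (hΔ : 0 < Δ) (i : ℤ) : volume (cell Δ i) = ENNReal.ofReal Δ := by
  rw [cell, Real.volume_Ico]
  congr 1
  ring

/-! ### toReal helper -/

lemma abs_toReal_sub_le {a b : ℝ≥0∞} {ε : ℝ} (ha : a ≠ ⊤) (hb : b ≠ ⊤) (hε : 0 ≤ ε)
    (h1 : a ≤ b + ENNReal.ofReal ε) (h2 : b ≤ a + ENNReal.ofReal ε) :
    |a.toReal - b.toReal| ≤ ε := by
  rw [abs_sub_le_iff]
  constructor
  · have h := ENNReal.toReal_mono (ENNReal.add_ne_top.2 ⟨hb, ENNReal.ofReal_ne_top⟩) h1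
    rw [ENNReal.toReal_add hb ENNReal.ofReal_ne_top, ENNReal.toReal_ofReal hε] at h
    linarith
  · have h := ENNReal.toReal_mono (ENNReal.add_ne_top.2 ⟨ha, ENNReal.ofReal_ne_top⟩) h2
    rw [ENNReal.toReal_add ha ENNReal.ofReal_ne_top, ENNReal.toReal_ofReal hε] at h
    linarith

/-! ### The core estimate -/

lemma core (P : Measure ℝ) [IsProbabilityMeasure P] (hP : P ≪ (volume : Measure ℝ))
    {ε : ℝ} (hε : 0 < ε) :
    ∀ᶠ Δ in nhdsWithin (0:ℝ) (Ioi 0), ∀ B : Set ℝ, MeasurableSet B → B ⊆ Ioo 0 1 →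
      |(P (Fd Δ ⁻¹' B)).toReal - (volume B).toReal| ≤ ε := by
  classical
  set p := P.rnDeriv volume with hp_def
  have hp_meas : Measurable p := Measure.measurable_rnDeriv P volume
  have hPd : ∀ S : Set ℝ, MeasurableSet S → P S = ∫⁻ x in S, p x := by
    intro S hS
    rw [← withDensity_apply p hS, Measure.withDensity_rnDeriv_eq P volume hP]
  have hε4 : (0:ℝ) < ε/4 := by linarith
  have hf_int : Integrable (fun x => (p x).toReal) volume :=
    Measure.integrable_toReal_rnDeriv
  obtain ⟨g0, hg0_supp, hg0_close, hg0_cont, -⟩ :=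
    (memLp_one_iff_integrable.2 hf_int).exists_hasCompactSupport_eLpNorm_sub_le
      ENNReal.one_ne_top (ε := ENNReal.ofReal (ε/4))
      (by rw [Ne, ENNReal.ofReal_eq_zero]; push_neg; linarith)
  set f := fun x => (p x).toReal with hf_def
  set g := fun x => max (g0 x) 0 with hg_def
  have hg_cont : Continuous g := hg0_cont.max continuous_const
  have hg_nonneg : ∀ x, 0 ≤ g x := fun x => le_max_right _ _
  have hg_supp : HasCompactSupport g := by
    apply hg0_supp.mono
    intro x hx
    simp only [Function.mem_support] at hx ⊢
    intro h0
    apply hx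
    rw [hg_def]
    simp [h0]
  have hg_close : eLpNorm (f - g) 1 volume ≤ ENNReal.ofReal (ε/4) := by
    refine le_trans (eLpNorm_mono fun x => ?_) hg0_close
    simp only [Pi.sub_apply, Real.norm_eq_abs]
    have ha : 0 ≤ f x := ENNReal.toReal_nonneg
    rcases le_total (g0 x) 0 with hc | hc
    · have : g x = 0 := by rw [hg_def]; simp [max_eq_right hc]
      rw [this, sub_zero, abs_of_nonneg ha, abs_of_nonneg (by linarith)]
      linarith
    · have : g x = g0 x := by rw [hg_def]; simp [max_eq_left hc]
      rw [this]
  -- support radius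
  obtain ⟨R0, hR0⟩ := hg_supp.isBounded.subset_closedBall 0
  set R := max R0 1 with hR_def
  have hR1 : (1:ℝ) ≤ R := le_max_right _ _
  have hRpos : (0:ℝ) < R := lt_of_lt_of_le one_pos hR1
  have hR : tsupport g ⊆ Icc (-R) R := by
    refine subset_trans hR0 ?_
    intro x hx
    rw [Metric.mem_closedBall, Real.dist_eq, sub_zero] at hx
    have := abs_le.1 hx
    exact ⟨le_trans (neg_le_neg (le_max_left _ _)) this.1, le_trans this.2 (le_max_left _ _)⟩
  -- modulus of continuity
  set ε₂ := ε/(16*(R+1)) with hε₂_def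
  have hε₂ : 0 < ε₂ := by
    rw [hε₂_def]
    positivity
  have hunif : UniformContinuous g :=
    hg_cont.uniformContinuous_of_tendsto_cocompact hg_supp.is_zero_at_infty
  obtain ⟨δ, hδ0, hδ⟩ := Metric.uniformContinuous_iff.1 hunif ε₂ hε₂
  -- L¹ comparison
  set h := fun x => ENNReal.ofReal (g x) with hh_def
  have hh_meas : Measurable h := ENNReal.measurable_ofReal.comp hg_cont.measurable
  set ρ := volume.withDensity h with hρ_def
  have hρS : ∀ S : Set ℝ, MeasurableSet S → ρ S = ∫⁻ x in S, h x :=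
    fun S hS => withDensity_apply _ hS
  set D := ∫⁻ x, ((p x - h x) + (h x - p x)) with hD_def
  have hD_le : D ≤ ENNReal.ofReal (ε/4) := by
    have hae : (fun x => (p x - h x) + (h x - p x)) =ᵐ[(volume : Measure ℝ)]
        fun x => (‖(f - g) x‖₊ : ℝ≥0∞) := by
      filter_upwards [Measure.rnDeriv_lt_top P volume] with x hx
      have hpx : p x = ENNReal.ofReal (f x) := (ENNReal.ofReal_toReal hx.ne).symm
      have hfx : (0:ℝ) ≤ f x := ENNReal.toReal_nonneg
      rw [hpx, hh_def, ← enorm_eq_nnnorm, ← ofReal_norm]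
      simp only [Pi.sub_apply, Real.norm_eq_abs]
      rcases le_total (f x) (g x) with hle | hle
      · rw [tsub_eq_zero_of_le (ENNReal.ofReal_le_ofReal hle), zero_add,
          ← ENNReal.ofReal_sub _ hfx]
        congr 1
        rw [abs_of_nonpos (by linarith)]
        ring
      · rw [tsub_eq_zero_of_le (ENNReal.ofReal_le_ofReal hle), add_zero,
          ← ENNReal.ofReal_sub _ (hg_nonneg x)]
        congr 1
        rw [abs_of_nonneg (by linarith)]
    calc D = ∫⁻ x, (‖(f - g) x‖₊ : ℝ≥0∞) := lintegral_congr_ae hae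
    _ = eLpNorm (f - g) 1 volume := by rw [eLpNorm_one_eq_lintegral_enorm]; rfl
    _ ≤ ENNReal.ofReal (ε/4) := hg_close
  have hcomp : ∀ S : Set ℝ, MeasurableSet S → P S ≤ ρ S + D ∧ ρ S ≤ P S + D := by
    intro S hS
    rw [hPd S hS, hρS S hS]
    constructor
    · calc ∫⁻ x in S, p x ≤ ∫⁻ x in S, (h x + ((p x - h x) + (h x - p x))) :=
            lintegral_mono (fun x => by
              calc p x ≤ h x + (p x - h x) := le_add_tsub
              _ ≤ h x + ((p x - h x) + (h x - p x)) := add_le_add_right le_self_add _)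
      _ = (∫⁻ x in S, h x) + ∫⁻ x in S, ((p x - h x) + (h x - p x)) := lintegral_add_left hh_meas _
      _ ≤ (∫⁻ x in S, h x) + D := add_le_add_right (setLIntegral_le_lintegral _ _) _
    · calc ∫⁻ x in S, h x ≤ ∫⁻ x in S, (p x + ((p x - h x) + (h x - p x))) :=
            lintegral_mono (fun x => by
              calc h x ≤ p x + (h x - p x) := le_add_tsub
              _ ≤ p x + ((p x - h x) + (h x - p x)) := add_le_add_right le_add_self _)
      _ = (∫⁻ x in S, p x) + ∫⁻ x in S, ((p x - h x) + (h x - p x)) := lintegral_add_left hp_meas _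
      _ ≤ (∫⁻ x in S, p x) + D := add_le_add_right (setLIntegral_le_lintegral _ _) _
  -- the eventual estimate
  have hmemΔ : Ioo (0:ℝ) (min δ 1) ∈ nhdsWithin (0:ℝ) (Ioi 0) :=
    Ioo_mem_nhdsGT_of_mem ⟨le_refl _, lt_min hδ0 one_pos⟩
  filter_upwards [hmemΔ] with Δ hΔmem
  obtain ⟨hΔ0, hΔm⟩ := hΔmem
  have hΔδ : Δ < δ := lt_of_lt_of_le hΔm (min_le_left _ _)
  have hΔ1 : Δ < 1 := lt_of_lt_of_le hΔm (min_le_right _ _)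
  intro B hB hBsub
  have hvolB1 : volume B ≤ 1 := by
    calc volume B ≤ volume (Ioo (0:ℝ) 1) := measure_mono hBsub
    _ = 1 := by simp [Real.volume_Ioo]
  -- oscillation bound on each cell
  have hosc : ∀ i : ℤ, ∀ x ∈ cell Δ i,
      h x ≤ ENNReal.ofReal (g ((i:ℝ)*Δ)) + ENNReal.ofReal ε₂ ∧
      ENNReal.ofReal (g ((i:ℝ)*Δ)) ≤ h x + ENNReal.ofReal ε₂ := by
    intro i x hx
    rw [cell, mem_Ico] at hx
    have hxlt : x < (i:ℝ)*Δ + Δ := by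
      have : ((i:ℝ)+1)*Δ = (i:ℝ)*Δ + Δ := by ring
      linarith [hx.2, this.le]
    have hdist : dist x ((i:ℝ)*Δ) < δ := by
      rw [Real.dist_eq, abs_of_nonneg (by linarith [hx.1])]
      linarith
    have hgg := hδ hdist
    rw [Real.dist_eq] at hgg
    have habs := abs_lt.1 hgg
    constructor
    · rw [hh_def]
      calc ENNReal.ofReal (g x) ≤ ENNReal.ofReal (g ((i:ℝ)*Δ) + ε₂) :=
            ENNReal.ofReal_le_ofReal (by linarith [habs.2])
      _ = ENNReal.ofReal (g ((i:ℝ)*Δ)) + ENNReal.ofReal ε₂ :=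
            ENNReal.ofReal_add (hg_nonneg _) hε₂.le
    · rw [hh_def]
      calc ENNReal.ofReal (g ((i:ℝ)*Δ)) ≤ ENNReal.ofReal (g x + ε₂) :=
            ENNReal.ofReal_le_ofReal (by linarith [habs.1])
      _ = ENNReal.ofReal (g x) + ENNReal.ofReal ε₂ :=
            ENNReal.ofReal_add (hg_nonneg _) hε₂.le
  -- index set of relevant cells
  set I : Finset ℤ := Finset.Icc (⌈-R/Δ⌉ - 1) ⌊R/Δ⌋ with hI_def
  have hfar : ∀ i : ℤ, i ∉ I → ∀ x ∈ cell Δ i, g x = 0 := by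
    intro i hi x hx
    rw [cell, mem_Ico] at hx
    by_contra hgx
    have hmem : x ∈ tsupport g := subset_closure (Function.mem_support.2 hgx)
    have hxR := hR hmem
    rw [mem_Icc] at hxR
    rw [hI_def, Finset.mem_Icc, not_and_or] at hi
    rcases hi with hlo | hhi
    · push_neg at hlo
      have h1 : (i:ℝ) + 1 ≤ (⌈-R/Δ⌉:ℝ) - 1 := by
        have : i + 1 ≤ ⌈-R/Δ⌉ - 1 := by omega
        exact_mod_cast this
      have h2 : ((⌈-R/Δ⌉:ℝ)) < -R/Δ + 1 := Int.ceil_lt_add_one _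
      have h3 : ((i:ℝ)+1)*Δ ≤ (-R/Δ)*Δ := mul_le_mul_of_nonneg_right (by linarith) hΔ0.le
      rw [div_mul_cancel₀ _ hΔ0.ne'] at h3
      linarith [hx.2, hxR.1]
    · push_neg at hhi
      have h1 : R/Δ < (i:ℝ) := by exact_mod_cast Int.floor_lt.1 hhi
      have h2 : R < (i:ℝ)*Δ := by
        rw [div_lt_iff₀ hΔ0] at h1
        linarith
      linarith [hx.1, hxR.2]
  have hcardΔ : (I.card : ℝ) * Δ ≤ 2*R + 2*Δ := by
    rcases le_or_gt (⌈-R/Δ⌉ - 1) ⌊R/Δ⌋ with hle | hlt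
    · have hcard_int : (I.card : ℤ) = ⌊R/Δ⌋ + 1 - (⌈-R/Δ⌉ - 1) := by
        rw [hI_def, Int.card_Icc, Int.toNat_of_nonneg (by omega)]
      have hfl : (⌊R/Δ⌋ : ℝ) ≤ R/Δ := Int.floor_le _
      have hcl : -R/Δ ≤ (⌈-R/Δ⌉ : ℝ) := Int.le_ceil _
      have hcR : (I.card : ℝ) = (⌊R/Δ⌋ : ℝ) + 1 - ((⌈-R/Δ⌉ : ℝ) - 1) := by
        exact_mod_cast hcard_int
      have hcard_le : (I.card : ℝ) ≤ 2*(R/Δ) + 2 := by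
        rw [hcR]
        have : -(R/Δ) ≤ ((⌈-R/Δ⌉ : ℝ)) := by rw [← neg_div]; exact hcl
        linarith
      have := mul_le_mul_of_nonneg_right hcard_le hΔ0.le
      calc (I.card : ℝ) * Δ ≤ (2*(R/Δ) + 2) * Δ := this
      _ = 2*R + 2*Δ := by field_simp
    · have : I = ∅ := by rw [hI_def]; exact Finset.Icc_eq_empty (by omega)
      rw [this]
      simp only [Finset.card_empty, Nat.cast_zero, zero_mul]
      positivity
  -- per-cell estimates
  set e : ℝ≥0∞ := ENNReal.ofReal ε₂ * (ENNReal.ofReal Δ * volume B) with he_def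
  have key : ∀ i : ℤ, ρ (Slice Δ i B) ≤ volume B * ρ (cell Δ i) + (if i ∈ I then e + e else 0) ∧
      volume B * ρ (cell Δ i) ≤ ρ (Slice Δ i B) + (if i ∈ I then e + e else 0) := by
    intro i
    by_cases hiI : i ∈ I
    · rw [if_pos hiI]
      have hcell_up : ρ (cell Δ i) ≤ (ENNReal.ofReal (g ((i:ℝ)*Δ)) + ENNReal.ofReal ε₂) * ENNReal.ofReal Δ := by
        rw [hρS _ (cell_measurableSet Δ i)]
        calc ∫⁻ x in cell Δ i, h x
            ≤ ∫⁻ _x in cell Δ i, (ENNReal.ofReal (g ((i:ℝ)*Δ)) + ENNReal.ofReal ε₂) :=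
              setLIntegral_mono' (cell_measurableSet Δ i) (fun x hx => (hosc i x hx).1)
        _ = (ENNReal.ofReal (g ((i:ℝ)*Δ)) + ENNReal.ofReal ε₂) * volume (cell Δ i) :=
              setLIntegral_const _ _
        _ = _ := by rw [volume_cell hΔ0]
      have hcell_down : ENNReal.ofReal (g ((i:ℝ)*Δ)) * ENNReal.ofReal Δ ≤
          ρ (cell Δ i) + ENNReal.ofReal ε₂ * ENNReal.ofReal Δ := by
        rw [hρS _ (cell_measurableSet Δ i)]
        calc ENNReal.ofReal (g ((i:ℝ)*Δ)) * ENNReal.ofReal Δ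
            = ENNReal.ofReal (g ((i:ℝ)*Δ)) * volume (cell Δ i) := by rw [volume_cell hΔ0]
        _ = ∫⁻ _x in cell Δ i, ENNReal.ofReal (g ((i:ℝ)*Δ)) := (setLIntegral_const _ _).symm
        _ ≤ ∫⁻ x in cell Δ i, (h x + ENNReal.ofReal ε₂) :=
              setLIntegral_mono' (cell_measurableSet Δ i) (fun x hx => (hosc i x hx).2)
        _ = (∫⁻ x in cell Δ i, h x) + ENNReal.ofReal ε₂ * volume (cell Δ i) := by
              rw [lintegral_add_right _ measurable_const, setLIntegral_const]
        _ = (∫⁻ x in cell Δ i, h x) + ENNReal.ofReal ε₂ * ENNReal.ofReal Δ := by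
              rw [volume_cell hΔ0]
      have hslice_up : ρ (Slice Δ i B) ≤
          (ENNReal.ofReal (g ((i:ℝ)*Δ)) + ENNReal.ofReal ε₂) * (ENNReal.ofReal Δ * volume B) := by
        rw [hρS _ (Slice_measurableSet i hB)]
        calc ∫⁻ x in Slice Δ i B, h x
            ≤ ∫⁻ _x in Slice Δ i B, (ENNReal.ofReal (g ((i:ℝ)*Δ)) + ENNReal.ofReal ε₂) :=
              setLIntegral_mono' (Slice_measurableSet i hB)
                (fun x hx => (hosc i x (Slice_subset_cell hΔ0 hBsub hx)).1)
        _ = (ENNReal.ofReal (g ((i:ℝ)*Δ)) + ENNReal.ofReal ε₂) * volume (Slice Δ i B) :=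
              setLIntegral_const _ _
        _ = _ := by rw [volume_Slice hΔ0]
      have hslice_down : ENNReal.ofReal (g ((i:ℝ)*Δ)) * (ENNReal.ofReal Δ * volume B) ≤
          ρ (Slice Δ i B) + e := by
        rw [hρS _ (Slice_measurableSet i hB), he_def]
        calc ENNReal.ofReal (g ((i:ℝ)*Δ)) * (ENNReal.ofReal Δ * volume B)
            = ENNReal.ofReal (g ((i:ℝ)*Δ)) * volume (Slice Δ i B) := by rw [volume_Slice hΔ0]
        _ = ∫⁻ _x in Slice Δ i B, ENNReal.ofReal (g ((i:ℝ)*Δ)) := (setLIntegral_const _ _).symm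
        _ ≤ ∫⁻ x in Slice Δ i B, (h x + ENNReal.ofReal ε₂) :=
              setLIntegral_mono' (Slice_measurableSet i hB)
                (fun x hx => (hosc i x (Slice_subset_cell hΔ0 hBsub hx)).2)
        _ = (∫⁻ x in Slice Δ i B, h x) + ENNReal.ofReal ε₂ * volume (Slice Δ i B) := by
              rw [lintegral_add_right _ measurable_const, setLIntegral_const]
        _ = (∫⁻ x in Slice Δ i B, h x) + ENNReal.ofReal ε₂ * (ENNReal.ofReal Δ * volume B) := by
              rw [volume_Slice hΔ0]
      constructor
      · calc ρ (Slice Δ i B)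
            ≤ (ENNReal.ofReal (g ((i:ℝ)*Δ)) + ENNReal.ofReal ε₂) * (ENNReal.ofReal Δ * volume B) :=
              hslice_up
        _ = ENNReal.ofReal (g ((i:ℝ)*Δ)) * ENNReal.ofReal Δ * volume B + e := by
              rw [he_def]; ring
        _ ≤ (ρ (cell Δ i) + ENNReal.ofReal ε₂ * ENNReal.ofReal Δ) * volume B + e :=
              add_le_add_left (mul_le_mul_left hcell_down _) _
        _ = volume B * ρ (cell Δ i) + (ENNReal.ofReal ε₂ * ENNReal.ofReal Δ * volume B + e) := by
              ring
        _ = volume B * ρ (cell Δ i) + (e + e) := by rw [he_def]; ring_nf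
      · calc volume B * ρ (cell Δ i)
            ≤ volume B * ((ENNReal.ofReal (g ((i:ℝ)*Δ)) + ENNReal.ofReal ε₂) * ENNReal.ofReal Δ) :=
              mul_le_mul_right hcell_up _
        _ = ENNReal.ofReal (g ((i:ℝ)*Δ)) * (ENNReal.ofReal Δ * volume B) + e := by
              rw [he_def]; ring
        _ ≤ (ρ (Slice Δ i B) + e) + e := add_le_add_left hslice_down _
        _ = ρ (Slice Δ i B) + (e + e) := by rw [add_assoc]
    · rw [if_neg hiI]
      have hcell0 : ρ (cell Δ i) = 0 := by
        rw [hρS _ (cell_measurableSet Δ i)]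
        rw [setLIntegral_congr_fun (g := fun _ => (0:ℝ≥0∞)) (cell_measurableSet Δ i)
          (fun x hx => by
            show ENNReal.ofReal (g x) = 0
            rw [hfar i hiI x hx, ENNReal.ofReal_zero])]
        exact lintegral_zero
      have hslice0 : ρ (Slice Δ i B) = 0 :=
        le_antisymm (le_trans (measure_mono (Slice_subset_cell hΔ0 hBsub)) hcell0.le) zero_le
      rw [hcell0, hslice0]
      simp
  -- sums
  have hsum_slice : ρ (Fd Δ ⁻¹' B) = ∑' i : ℤ, ρ (Slice Δ i B) := by
    rw [preimage_Fd hΔ0 hBsub]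
    exact measure_iUnion (Slice_disjoint hΔ0 hBsub) (fun i => Slice_measurableSet i hB)
  have hsum_cell : ρ univ = ∑' i : ℤ, ρ (cell Δ i) := by
    conv_lhs => rw [← iUnion_cell hΔ0]
    exact measure_iUnion (cell_disjoint hΔ0) (fun i => cell_measurableSet Δ i)
  have hE : (∑' i : ℤ, (if i ∈ I then e + e else 0)) ≤ ENNReal.ofReal (ε/4) := by
    rw [tsum_eq_sum (s := I) (fun i hi => if_neg hi)]
    have h2 : ∑ i ∈ I, (if i ∈ I then e + e else 0) = I.card * (e + e) := by
      rw [Finset.sum_congr rfl (fun i hi => if_pos hi), Finset.sum_const, nsmul_eq_mul]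
    rw [h2]
    have hee : e + e ≤ ENNReal.ofReal (ε₂*Δ + ε₂*Δ) := by
      have he1 : e ≤ ENNReal.ofReal (ε₂*Δ) := by
        rw [he_def]
        calc ENNReal.ofReal ε₂ * (ENNReal.ofReal Δ * volume B)
            ≤ ENNReal.ofReal ε₂ * (ENNReal.ofReal Δ * 1) :=
              mul_le_mul_right (mul_le_mul_right hvolB1 _) _
        _ = ENNReal.ofReal ε₂ * ENNReal.ofReal Δ := by rw [mul_one]
        _ = ENNReal.ofReal (ε₂*Δ) := (ENNReal.ofReal_mul hε₂.le).symm
      calc e + e ≤ ENNReal.ofReal (ε₂*Δ) + ENNReal.ofReal (ε₂*Δ) := add_le_add he1 he1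
      _ = ENNReal.ofReal (ε₂*Δ + ε₂*Δ) := (ENNReal.ofReal_add (by positivity) (by positivity)).symm
    calc (I.card : ℝ≥0∞) * (e + e) ≤ (I.card : ℝ≥0∞) * ENNReal.ofReal (ε₂*Δ + ε₂*Δ) :=
          mul_le_mul_right hee _
    _ = ENNReal.ofReal ((I.card : ℝ) * (ε₂*Δ + ε₂*Δ)) := by
          rw [ENNReal.ofReal_mul (Nat.cast_nonneg _), ENNReal.ofReal_natCast]
    _ ≤ ENNReal.ofReal (ε/4) := by
          apply ENNReal.ofReal_le_ofReal
          have hKΔ : (I.card:ℝ)*Δ ≤ 2*R+2 := le_trans hcardΔ (by linarith)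
          have h16 : ε₂ * (16*(R+1)) = ε := by rw [hε₂_def]; field_simp
          nlinarith [mul_le_mul_of_nonneg_left hKΔ (show (0:ℝ) ≤ 2*ε₂ by positivity)]
  have hup : ρ (Fd Δ ⁻¹' B) ≤ volume B * ρ univ + ∑' i : ℤ, (if i ∈ I then e + e else 0) := by
    rw [hsum_slice, hsum_cell]
    calc (∑' i : ℤ, ρ (Slice Δ i B))
        ≤ ∑' i : ℤ, (volume B * ρ (cell Δ i) + (if i ∈ I then e + e else 0)) :=
          ENNReal.tsum_le_tsum (fun i => (key i).1)
    _ = (∑' i : ℤ, volume B * ρ (cell Δ i)) + ∑' i : ℤ, (if i ∈ I then e + e else 0) :=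
          ENNReal.tsum_add
    _ = volume B * (∑' i : ℤ, ρ (cell Δ i)) + ∑' i : ℤ, (if i ∈ I then e + e else 0) := by
          rw [ENNReal.tsum_mul_left]
  have hdown : volume B * ρ univ ≤ ρ (Fd Δ ⁻¹' B) + ∑' i : ℤ, (if i ∈ I then e + e else 0) := by
    rw [hsum_slice, hsum_cell]
    calc volume B * (∑' i : ℤ, ρ (cell Δ i)) = ∑' i : ℤ, volume B * ρ (cell Δ i) :=
          ENNReal.tsum_mul_left.symm
    _ ≤ ∑' i : ℤ, (ρ (Slice Δ i B) + (if i ∈ I then e + e else 0)) :=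
          ENNReal.tsum_le_tsum (fun i => (key i).2)
    _ = (∑' i : ℤ, ρ (Slice Δ i B)) + ∑' i : ℤ, (if i ∈ I then e + e else 0) :=
          ENNReal.tsum_add
  -- combine
  obtain ⟨hc1, hc2⟩ := hcomp _ (Fd_measurable Δ hB)
  obtain ⟨hu1, hu2⟩ := hcomp univ MeasurableSet.univ
  have hρuniv_le : ρ univ ≤ 1 + D := by
    have h' := hu2
    rwa [measure_univ (μ := P)] at h'
  have h1le : (1:ℝ≥0∞) ≤ ρ univ + D := by
    have h' := hu1
    rwa [measure_univ (μ := P)] at h'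
  set E := ∑' i : ℤ, (if i ∈ I then e + e else 0) with hE_def
  have hDE : D + (E + D) ≤ ENNReal.ofReal ε := by
    calc D + (E + D) ≤ ENNReal.ofReal (ε/4) + (ENNReal.ofReal (ε/4) + ENNReal.ofReal (ε/4)) :=
          add_le_add hD_le (add_le_add hE hD_le)
    _ = ENNReal.ofReal (ε/4 + (ε/4 + ε/4)) := by
          rw [← ENNReal.ofReal_add (by linarith) (by linarith),
            ← ENNReal.ofReal_add (by linarith) (by linarith)]
    _ ≤ ENNReal.ofReal ε := ENNReal.ofReal_le_ofReal (by linarith)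
  have hfinal_up : P (Fd Δ ⁻¹' B) ≤ volume B + ENNReal.ofReal ε := by
    calc P (Fd Δ ⁻¹' B) ≤ ρ (Fd Δ ⁻¹' B) + D := hc1
    _ ≤ (volume B * ρ univ + E) + D := add_le_add_left hup _
    _ ≤ (volume B * (1 + D) + E) + D :=
          add_le_add_left (add_le_add_left (mul_le_mul_right hρuniv_le _) _) _
    _ = volume B + (volume B * D + (E + D)) := by ring
    _ ≤ volume B + (1 * D + (E + D)) :=
          add_le_add_right (add_le_add_left (mul_le_mul_left hvolB1 _) _) _
    _ = volume B + (D + (E + D)) := by rw [one_mul]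
    _ ≤ volume B + ENNReal.ofReal ε := add_le_add_right hDE _
  have hfinal_down : volume B ≤ P (Fd Δ ⁻¹' B) + ENNReal.ofReal ε := by
    calc volume B = volume B * 1 := (mul_one _).symm
    _ ≤ volume B * (ρ univ + D) := mul_le_mul_right h1le _
    _ = volume B * ρ univ + volume B * D := mul_add _ _ _
    _ ≤ (ρ (Fd Δ ⁻¹' B) + E) + volume B * D := add_le_add_left hdown _
    _ ≤ ((P (Fd Δ ⁻¹' B) + D) + E) + 1 * D :=
          add_le_add (add_le_add_left hc2 _) (mul_le_mul_left hvolB1 _)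
    _ = P (Fd Δ ⁻¹' B) + (D + (E + D)) := by rw [one_mul]; ring
    _ ≤ P (Fd Δ ⁻¹' B) + ENNReal.ofReal ε := add_le_add_right hDE _
  exact abs_toReal_sub_le (measure_ne_top P _)
    (ne_top_of_le_ne_top ENNReal.one_ne_top hvolB1) hε.le hfinal_up hfinal_down

end Sawtooth

/-- Universal simulation by sawtooth maps: for every absolutely continuous seed `P`,
the total variation error of the (P-independent) sawtooth simulator vanishes as `Δ → 0⁺`. -/
theorem sawtooth_universal_simulation (Q : Measure ℝ) [IsProbabilityMeasure Q]
    (P : Measure ℝ) [IsProbabilityMeasure P] (hP : P ≪ (volume : Measure ℝ)) :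
    Tendsto (fun Δ : ℝ => TVdist (P.map (sawtooth Q Δ)) Q) (nhdsWithin 0 (Set.Ioi 0))
      (nhds 0) := by
  have hqm := Sawtooth.qm_measurable Q
  haveI : Nonempty {s : Set ℝ // MeasurableSet s} := ⟨⟨∅, MeasurableSet.empty⟩⟩
  rw [Metric.tendsto_nhds]
  intro ε hε
  have hcore := Sawtooth.core P hP (half_pos hε)
  filter_upwards [hcore, self_mem_nhdsWithin] with Δ hΔcore hΔpos
  have hnn : 0 ≤ TVdist (P.map (sawtooth Q Δ)) Q :=
    Real.iSup_nonneg (fun A => abs_nonneg _)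
  rw [Real.dist_eq, sub_zero, abs_of_nonneg hnn]
  have hΔ0 : (0:ℝ) < Δ := hΔpos
  have hTV : TVdist (P.map (sawtooth Q Δ)) Q ≤ ε/2 := by
    simp only [TVdist]
    apply ciSup_le
    rintro ⟨A, hA⟩
    have hmapeq := Sawtooth.map_sawtooth Q P hP hΔ0
    set Epre := Sawtooth.qm Q ⁻¹' A with hEpre
    have hEpre_meas : MeasurableSet Epre := hqm hA
    set B := Epre ∩ Ioo 0 1 with hBdef
    have hB_meas : MeasurableSet B := hEpre_meas.inter measurableSet_Ioo
    have hmap1 : (P.map (sawtooth Q Δ)) A = P (Sawtooth.Fd Δ ⁻¹' B) := by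
      rw [hmapeq, Measure.map_apply (hqm.comp (Sawtooth.Fd_measurable Δ)) hA]
      have hpre : (Sawtooth.qm Q ∘ Sawtooth.Fd Δ) ⁻¹' A = Sawtooth.Fd Δ ⁻¹' Epre := rfl
      rw [hpre]
      apply le_antisymm
      · have hsub : Sawtooth.Fd Δ ⁻¹' Epre ⊆ (Sawtooth.Fd Δ ⁻¹' B) ∪ Sawtooth.Ngrid Δ := by
          intro x hx
          by_cases hxn : x ∈ Sawtooth.Ngrid Δ
          · exact Or.inr hxn
          · exact Or.inl ⟨hx, Sawtooth.Fd_mem_Ioo hΔ0 hxn⟩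
        calc P (Sawtooth.Fd Δ ⁻¹' Epre) ≤ P ((Sawtooth.Fd Δ ⁻¹' B) ∪ Sawtooth.Ngrid Δ) :=
              measure_mono hsub
        _ ≤ P (Sawtooth.Fd Δ ⁻¹' B) + P (Sawtooth.Ngrid Δ) := measure_union_le _ _
        _ = P (Sawtooth.Fd Δ ⁻¹' B) := by rw [hP (Sawtooth.Ngrid_null Δ), add_zero]
      · exact measure_mono (preimage_mono inter_subset_left)
    have hmap2 : Q A = volume B := by
      conv_lhs => rw [← Sawtooth.map_qm Q]
      rw [Measure.map_apply hqm hA, Measure.restrict_apply hEpre_meas]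
    rw [hmap1, hmap2]
    exact hΔcore B hB_meas inter_subset_right
  linarith
end

section
/- Squeezing periodic functions decorrelation lemma: Let f ∈ L¹(ℝ), let g : [a,b] → ℝ be integrable with |g| essentially bounded, and for Δ > 0 define the periodized squeeze g_Δ(x) = g(a + ((b−a)/Δ)(x − iΔ)) for x ∈ (iΔ, (i+1)Δ]. Then lim_{Δ→0} ∫_ℝ f(x) g_Δ(x) dx = (1/(b−a)) (∫_ℝ f(x) dx)(∫_a^b g(t) dt). -/
open MeasureTheory Set Filter intervalIntegral

/-- The `Δ`-periodic squeeze of `g : [a,b] → ℝ`: on each interval `(iΔ, (i+1)Δ]`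
(where `i = ⌈x/Δ⌉ - 1`), `x ↦ g (a + ((b-a)/Δ)(x - iΔ))`. -/
noncomputable def squeeze (g : ℝ → ℝ) (a b Δ : ℝ) (x : ℝ) : ℝ :=
  g (a + ((b - a) / Δ) * (x - ((⌈x / Δ⌉ : ℝ) - 1) * Δ))

/-- The decorrelation property for a fixed periodic function `h`. -/
def OscP (h f : ℝ → ℝ) : Prop :=
  Tendsto (fun Δ : ℝ => ∫ x, f x * h (x / Δ)) (nhdsWithin 0 (Set.Ioi 0))
    (nhds ((∫ x, f x) * ∫ y in (0:ℝ)..1, h y))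

section Osc

variable {h : ℝ → ℝ} {C : ℝ}

theorem osc_intInt (hmeas : Measurable h) (hC : ∀ x, |h x| ≤ C) :
    ∀ u v : ℝ, IntervalIntegrable h volume u v := by
  intro u v
  constructor <;>
  · refine Integrable.mono' (integrable_const C) hmeas.aestronglyMeasurable ?_
    filter_upwards with x using by simpa using hC x

theorem osc_Ioc (hmeas : Measurable h) (hper : Function.Periodic h 1) (hC : ∀ x, |h x| ≤ C)
    (c d : ℝ) (hcd : c ≤ d) :
    Tendsto (fun Δ : ℝ => ∫ x in Ioc c d, h (x / Δ)) (nhdsWithin 0 (Set.Ioi 0))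
      (nhds ((d - c) * ∫ y in (0:ℝ)..1, h y)) := by
  have hC0 : 0 ≤ C := (abs_nonneg (h 0)).trans (hC 0)
  set m : ℝ := ∫ y in (0:ℝ)..1, h y with hm
  have hInt := osc_intInt hmeas hC
  have key : ∀ Δ : ℝ, Δ ∈ Ioi (0:ℝ) →
      ‖(∫ x in Ioc c d, h (x / Δ)) - (d - c) * m‖ ≤ Δ * (|m| + C) := by
    intro Δ hΔ
    rw [mem_Ioi] at hΔ
    have hΔ0 : Δ ≠ 0 := ne_of_gt hΔ
    set u := c / Δ
    set v := d / Δ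
    set n : ℤ := ⌊v - u⌋ with hn
    have h1 : (n : ℝ) ≤ v - u := Int.floor_le _
    have h2 : v - u < n + 1 := Int.lt_floor_add_one _
    have hvu : Δ * (v - u) = d - c := by simp only [u, v]; field_simp
    have hmean : ∫ y in u..u + (1:ℝ), h y = m := by
      simpa using hper.intervalIntegral_add_eq u 0
    have hA : ∫ y in u..u + (n:ℝ), h y = n * m := by
      have := hper.intervalIntegral_add_zsmul_eq n u hInt
      rw [zsmul_eq_mul, mul_one] at this
      rw [this, hmean, zsmul_eq_mul]
    have hsplit : ∫ y in u..v, h y = n * m + ∫ y in (u + (n:ℝ))..v, h y := by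
      rw [← hA, integral_add_adjacent_intervals (hInt _ _) (hInt _ _)]
    have htail : |∫ y in (u + (n:ℝ))..v, h y| ≤ C := by
      have hb := intervalIntegral.norm_integral_le_of_norm_le_const
        (f := h) (a := u + (n:ℝ)) (b := v) (C := C) (fun x _ => by simpa using hC x)
      have : |v - (u + (n:ℝ))| ≤ 1 := by rw [abs_le]; constructor <;> nlinarith
      calc |∫ y in (u + (n:ℝ))..v, h y| ≤ C * |v - (u + (n:ℝ))| := hb
        _ ≤ C * 1 := by exact mul_le_mul_of_nonneg_left this hC0
        _ = C := mul_one C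
    have hval : (∫ x in Ioc c d, h (x / Δ)) = Δ * ∫ y in u..v, h y := by
      rw [← intervalIntegral.integral_of_le hcd, intervalIntegral.integral_comp_div _ hΔ0,
        smul_eq_mul]
    rw [hval, hsplit]
    have hΔn : |Δ * n - (d - c)| ≤ Δ := by
      rw [abs_le]; constructor <;> nlinarith
    have expand : Δ * ((n:ℝ) * m + ∫ y in (u + (n:ℝ))..v, h y) - (d - c) * m
        = (Δ * n - (d - c)) * m + Δ * ∫ y in (u + (n:ℝ))..v, h y := by ring
    rw [Real.norm_eq_abs, expand]
    calc |(Δ * n - (d - c)) * m + Δ * ∫ y in (u + (n:ℝ))..v, h y|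
        ≤ |(Δ * n - (d - c)) * m| + |Δ * ∫ y in (u + (n:ℝ))..v, h y| := abs_add_le _ _
      _ ≤ Δ * |m| + Δ * C := by
          rw [abs_mul, abs_mul, abs_of_pos hΔ]
          gcongr
      _ = Δ * (|m| + C) := by ring
  have hzero : Tendsto (fun Δ : ℝ => Δ * (|m| + C)) (nhdsWithin 0 (Set.Ioi 0)) (nhds 0) := by
    have : Tendsto (fun Δ : ℝ => Δ * (|m| + C)) (nhds 0) (nhds (0 * (|m| + C))) :=
      (continuous_id.mul continuous_const).tendsto 0
    rw [zero_mul] at this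
    exact this.mono_left nhdsWithin_le_nhds
  rw [← tendsto_sub_nhds_zero_iff]
  exact squeeze_zero_norm' (eventually_nhdsWithin_of_forall key) hzero


theorem osc_prod_int (hmeas : Measurable h) (hC : ∀ x, |h x| ≤ C)
    {f : ℝ → ℝ} (hf : Integrable f) (Δ : ℝ) :
    Integrable (fun x => f x * h (x / Δ)) := by
  have hms : AEStronglyMeasurable (fun x : ℝ => h (x / Δ)) volume :=
    (hmeas.comp (measurable_id.div_const Δ)).aestronglyMeasurable
  have := Integrable.bdd_mul (f := fun x : ℝ => h (x / Δ)) (g := f) (c := C) hf hms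
    (by filter_upwards with x using by simpa using hC _)
  simpa [mul_comm] using this

theorem osc_add (hmeas : Measurable h) (hC : ∀ x, |h x| ≤ C)
    {f₁ f₂ : ℝ → ℝ} (h₁ : Integrable f₁) (h₂ : Integrable f₂)
    (P₁ : OscP h f₁) (P₂ : OscP h f₂) : OscP h (fun x => f₁ x + f₂ x) := by
  have heq : (fun Δ : ℝ => ∫ x, (f₁ x + f₂ x) * h (x / Δ))
      = fun Δ : ℝ => (∫ x, f₁ x * h (x / Δ)) + ∫ x, f₂ x * h (x / Δ) := by
    funext Δ
    rw [← integral_add (osc_prod_int hmeas hC h₁ Δ) (osc_prod_int hmeas hC h₂ Δ)]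
    congr 1; funext x; ring
  have hlim : (∫ x, (f₁ x + f₂ x)) * ∫ y in (0:ℝ)..1, h y
      = (∫ x, f₁ x) * (∫ y in (0:ℝ)..1, h y) + (∫ x, f₂ x) * ∫ y in (0:ℝ)..1, h y := by
    rw [integral_add h₁ h₂]; ring
  unfold OscP
  rw [heq, hlim]
  exact P₁.add P₂

theorem osc_indicator (hmeas : Measurable h) (hper : Function.Periodic h 1)
    (hC : ∀ x, |h x| ≤ C) (c d r : ℝ) (hcd : c ≤ d) :
    OscP h (Set.indicator (Ioc c d) fun _ => r) := by
  have heq : (fun Δ : ℝ => ∫ x, (Set.indicator (Ioc c d) fun _ => r) x * h (x / Δ))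
      = fun Δ : ℝ => r * ∫ x in Ioc c d, h (x / Δ) := by
    funext Δ
    rw [← MeasureTheory.integral_indicator measurableSet_Ioc, ← MeasureTheory.integral_const_mul]
    congr 1; funext x
    by_cases hx : x ∈ Ioc c d <;> simp [hx]
  have hlim : (∫ x, (Set.indicator (Ioc c d) fun _ => r) x) * ∫ y in (0:ℝ)..1, h y
      = r * ((d - c) * ∫ y in (0:ℝ)..1, h y) := by
    rw [integral_indicator_const _ measurableSet_Ioc, Real.volume_real_Ioc_of_le hcd,
      smul_eq_mul]
    ring
  unfold OscP
  rw [heq, hlim]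
  exact (osc_Ioc hmeas hper hC c d hcd).const_mul r

theorem osc_closed (hmeas : Measurable h) (hC : ∀ x, |h x| ≤ C)
    {f : ℝ → ℝ} (hf : Integrable f)
    (happrox : ∀ ε : ℝ, 0 < ε → ∃ f' : ℝ → ℝ, Integrable f' ∧ (∫ x, |f x - f' x|) ≤ ε ∧ OscP h f') :
    OscP h f := by
  have hC0 : 0 ≤ C := (abs_nonneg (h 0)).trans (hC 0)
  set m : ℝ := ∫ y in (0:ℝ)..1, h y with hm
  rw [OscP, Metric.tendsto_nhds]
  intro ε hε
  set K : ℝ := |m| + C + 1 with hK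
  have hK0 : 0 < K := by positivity
  have hδ0 : 0 < ε / (3 * K) := by positivity
  obtain ⟨f', hf'int, herr, hP'⟩ := happrox (ε / (3 * K)) hδ0
  have herr0 : 0 ≤ ∫ x, |f x - f' x| := integral_nonneg fun x => abs_nonneg _
  have hmain : ∀ Δ : ℝ, |(∫ x, f x * h (x / Δ)) - ∫ x, f' x * h (x / Δ)| ≤ C * (ε / (3 * K)) := by
    intro Δ
    have hsub : (∫ x, f x * h (x / Δ)) - (∫ x, f' x * h (x / Δ))
        = ∫ x, (f x - f' x) * h (x / Δ) := by
      rw [← integral_sub (osc_prod_int hmeas hC hf Δ) (osc_prod_int hmeas hC hf'int Δ)]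
      congr 1; funext x; ring
    rw [hsub]
    calc |∫ x, (f x - f' x) * h (x / Δ)| ≤ ∫ x, |f x - f' x| * |h (x / Δ)| := by
          simpa using norm_integral_le_integral_norm (fun x => (f x - f' x) * h (x / Δ))
      _ ≤ ∫ x, C * |f x - f' x| := by
          refine integral_mono
            ((osc_prod_int hmeas hC (hf.sub hf'int) Δ).abs.congr
              (by filter_upwards with x using abs_mul _ _))
            ((hf.sub hf'int).abs.const_mul C) fun x => ?_
          rw [mul_comm C]
          exact mul_le_mul_of_nonneg_left (hC _) (abs_nonneg _)
      _ = C * ∫ x, |f x - f' x| := integral_const_mul C _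
      _ ≤ C * (ε / (3 * K)) := mul_le_mul_of_nonneg_left herr hC0
  have hint : |(∫ x, f' x) - ∫ x, f x| ≤ ε / (3 * K) := by
    calc |(∫ x, f' x) - ∫ x, f x| = |∫ x, (f' x - f x)| := by
          rw [integral_sub hf'int hf]
      _ ≤ ∫ x, |f' x - f x| := by
          simpa using norm_integral_le_integral_norm (fun x => f' x - f x)
      _ = ∫ x, |f x - f' x| := by congr 1; funext x; rw [abs_sub_comm]
      _ ≤ ε / (3 * K) := herr
  have hCK : C ≤ K := by rw [hK]; linarith [abs_nonneg m]
  have hmK : |m| ≤ K := by rw [hK]; linarith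
  have hKval : ε / 3 = K * (ε / (3 * K)) := by field_simp
  rw [OscP, Metric.tendsto_nhds] at hP'
  filter_upwards [hP' (ε / 3) (by positivity)] with Δ hΔ
  have e1 : dist (∫ x, f x * h (x / Δ)) (∫ x, f' x * h (x / Δ)) ≤ ε / 3 := by
    rw [Real.dist_eq]
    refine (hmain Δ).trans ?_
    rw [hKval]
    exact mul_le_mul_of_nonneg_right hCK hδ0.le
  have e3 : dist ((∫ x, f' x) * m) ((∫ x, f x) * m) ≤ ε / 3 := by
    rw [Real.dist_eq]
    calc |(∫ x, f' x) * m - (∫ x, f x) * m| = |(∫ x, f' x) - ∫ x, f x| * |m| := by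
          rw [← abs_mul]; congr 1; ring
      _ ≤ (ε / (3 * K)) * K := by
          exact mul_le_mul hint hmK (abs_nonneg _) hδ0.le
      _ = ε / 3 := by rw [hKval]; ring
  calc dist (∫ x, f x * h (x / Δ)) ((∫ x, f x) * m)
      ≤ dist (∫ x, f x * h (x / Δ)) (∫ x, f' x * h (x / Δ))
        + dist (∫ x, f' x * h (x / Δ)) ((∫ x, f x) * m) := dist_triangle _ _ _
    _ ≤ dist (∫ x, f x * h (x / Δ)) (∫ x, f' x * h (x / Δ))
        + (dist (∫ x, f' x * h (x / Δ)) ((∫ x, f' x) * m)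
          + dist ((∫ x, f' x) * m) ((∫ x, f x) * m)) := by
        gcongr
        exact dist_triangle _ _ _
    _ < ε := by
        have := hΔ
        linarith [e1, e3]

theorem osc_zero (h : ℝ → ℝ) : OscP h fun _ => 0 := by
  unfold OscP
  simpa using tendsto_const_nhds

theorem osc_sum (hmeas : Measurable h) (hC : ∀ x, |h x| ≤ C)
    (F : ℕ → ℝ → ℝ) (hint : ∀ k, Integrable (F k)) (hP : ∀ k, OscP h (F k)) (n : ℕ) :
    OscP h (fun x => ∑ k ∈ Finset.range n, F k x) := by
  induction n with
  | zero => simpa using osc_zero h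
  | succ n ih =>
    have : (fun x => ∑ k ∈ Finset.range (n+1), F k x)
        = fun x => (∑ k ∈ Finset.range n, F k x) + F n x := by
      funext x; rw [Finset.sum_range_succ]
    rw [this]
    exact osc_add hmeas hC (integrable_finset_sum _ fun k _ => hint k) (hint n) ih (hP n)

theorem osc_step_approx (hmeas : Measurable h) (hper : Function.Periodic h 1)
    (hC : ∀ x, |h x| ≤ C) {f : ℝ → ℝ} (hf : Integrable f) {ε : ℝ} (hε : 0 < ε) :
    ∃ s : ℝ → ℝ, Integrable s ∧ (∫ x, |f x - s x|) ≤ ε ∧ OscP h s := by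
  obtain ⟨f', hf'supp, hf'close, hf'cont, hf'int⟩ :=
    hf.exists_hasCompactSupport_integral_sub_le (half_pos hε)
  obtain ⟨R, hR⟩ := hf'supp.isBounded.subset_closedBall (0:ℝ)
  set R' : ℝ := max R 0 + 1 with hR'
  have hR'0 : 0 < R' := by positivity
  have hsupp : ∀ x, x ∉ Ioc (-R') R' → f' x = 0 := by
    intro x hx
    apply image_eq_zero_of_notMem_tsupport
    intro hmem
    apply hx
    have := hR hmem
    rw [Metric.mem_closedBall, Real.dist_eq, sub_zero] at this
    have h1 : -R ≤ x := neg_le_of_abs_le this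
    have h2 : x ≤ R := le_of_abs_le this
    have h3 : R ≤ max R 0 := le_max_left _ _
    have h4 : -(max R 0) ≤ -R := by linarith
    exact ⟨by simp only [hR']; linarith, by simp only [hR']; linarith⟩
  have hu := hf'supp.uniformContinuous_of_continuous hf'cont
  rw [Metric.uniformContinuous_iff] at hu
  set ε₂ : ℝ := ε / (2 * (2 * R' + 1)) with hε₂def
  have hε₂ : 0 < ε₂ := by positivity
  obtain ⟨δ, hδ0, hδ⟩ := hu ε₂ hε₂
  obtain ⟨n, hn⟩ := exists_nat_gt (2 * R' / δ)
  have hn0 : 0 < (n:ℝ) := lt_trans (by positivity) hn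
  set η : ℝ := 2 * R' / n with hηdef
  have hη0 : 0 < η := by positivity
  have hηδ : η < δ := by
    rw [hηdef, div_lt_iff₀ hn0]
    rw [div_lt_iff₀ hδ0] at hn
    nlinarith
  set pt : ℕ → ℝ := fun k => -R' + k * η with hptdef
  have hpt_mono : ∀ j k : ℕ, j ≤ k → pt j ≤ pt k := by
    intro j k hjk
    have : (j:ℝ) ≤ k := by exact_mod_cast hjk
    simp only [hptdef]
    nlinarith
  have hptn : pt n = R' := by
    simp only [hptdef, hηdef]
    field_simp
    ring
  set s : ℝ → ℝ := fun x =>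
    ∑ k ∈ Finset.range n, Set.indicator (Ioc (pt k) (pt (k+1))) (fun _ => f' (pt (k+1))) x
    with hsdef
  have hterm_int : ∀ k : ℕ, Integrable (Set.indicator (Ioc (pt k) (pt (k+1))) fun _ => f' (pt (k+1))) :=
    fun k => (integrable_indicator_iff measurableSet_Ioc).2
      (integrableOn_const measure_Ioc_lt_top.ne)
  have hsint : Integrable s := integrable_finset_sum _ fun k _ => hterm_int k
  have hP : OscP h s :=
    osc_sum hmeas hC _ hterm_int
      (fun k => osc_indicator hmeas hper hC _ _ _
        (hpt_mono k (k+1) (Nat.le_succ k))) n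
  have hptwise : ∀ x, |f' x - s x| ≤ Set.indicator (Ioc (-R') R') (fun _ => ε₂) x := by
    intro x
    by_cases hx : x ∈ Ioc (-R') R'
    · set t : ℝ := (x + R') / η with htdef
      have ht0 : 0 < t := div_pos (by linarith [hx.1]) hη0
      have htn : t ≤ n := by
        rw [htdef, div_le_iff₀ hη0]
        have h2 : (n:ℝ) * η = 2 * R' := by rw [hηdef]; field_simp
        have := hx.2
        linarith
      set k₀ : ℕ := ⌈t⌉₊ with hk₀def
      have hk₀1 : 1 ≤ k₀ := Nat.one_le_ceil_iff.2 ht0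
      have hk₀n : k₀ ≤ n := Nat.ceil_le.2 htn
      set j : ℕ := k₀ - 1 with hjdef
      have hj : j + 1 = k₀ := Nat.succ_pred_eq_of_pos hk₀1
      have hjn : j < n := lt_of_lt_of_le (by omega) hk₀n
      have hjt : (j:ℝ) < t := by
        have h1 : (k₀:ℝ) < t + 1 := Nat.ceil_lt_add_one ht0.le
        have h2 : (j:ℝ) = (k₀:ℝ) - 1 := by
          rw [hjdef, Nat.cast_sub hk₀1]; simp
        linarith
      have htk₀ : t ≤ (k₀:ℝ) := Nat.le_ceil t
      have hxt : x = -R' + t * η := by rw [htdef]; field_simp; ring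
      have hmem : x ∈ Ioc (pt j) (pt (j+1)) := by
        constructor
        · show pt j < x
          rw [hxt]; simp only [hptdef]; nlinarith
        · show x ≤ pt (j+1)
          rw [hxt]
          have hcast : ((j+1 : ℕ):ℝ) = (k₀:ℝ) := by exact_mod_cast hj
          simp only [hptdef]
          rw [hcast]
          nlinarith
      have hsx : s x = f' (pt (j+1)) := by
        rw [hsdef]
        refine Finset.sum_eq_single_of_mem j (Finset.mem_range.2 hjn) ?_ |>.trans
          (Set.indicator_of_mem hmem _)
        intro k hk hkj
        apply Set.indicator_of_notMem
        intro hxk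
        rcases lt_or_gt_of_ne hkj with hlt | hgt
        · have hle : pt (k+1) ≤ pt j := hpt_mono _ _ hlt
          have := hxk.2
          have := hmem.1
          linarith
        · have hle : pt (j+1) ≤ pt k := hpt_mono _ _ hgt
          have := hxk.1
          have := hmem.2
          linarith
      rw [hsx, Set.indicator_of_mem hx]
      have hdist : dist x (pt (j+1)) < δ := by
        rw [Real.dist_eq, abs_lt]
        have h1 : pt j < x := hmem.1
        have h2 : x ≤ pt (j+1) := hmem.2
        have h3 : pt (j+1) = pt j + η := by
          simp only [hptdef]; push_cast; ring
        constructor <;> linarith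
      exact (le_of_lt (by simpa [Real.dist_eq] using hδ hdist))
    · have hsx : s x = 0 := by
        rw [hsdef]
        apply Finset.sum_eq_zero
        intro k hk
        apply Set.indicator_of_notMem
        intro hxk
        apply hx
        have h1 : pt 0 ≤ pt k := hpt_mono 0 k (Nat.zero_le k)
        have h2 : pt (k+1) ≤ pt n := hpt_mono (k+1) n (Finset.mem_range.1 hk)
        have h3 : pt 0 = -R' := by simp [hptdef]
        refine ⟨?_, ?_⟩
        · have := hxk.1; linarith
        · have := hxk.2; rw [← hptn]; linarith
      rw [hsx, hsupp x hx, Set.indicator_of_notMem hx]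
      simp
  have hInd : Integrable (Set.indicator (Ioc (-R') R') fun _ => ε₂) :=
    (integrable_indicator_iff measurableSet_Ioc).2
      (integrableOn_const measure_Ioc_lt_top.ne)
  have hclose2 : (∫ x, |f' x - s x|) ≤ ε / 2 := by
    calc ∫ x, |f' x - s x|
        ≤ ∫ x, Set.indicator (Ioc (-R') R') (fun _ => ε₂) x :=
          integral_mono (hf'int.sub hsint).abs hInd hptwise
      _ = (volume (Ioc (-R') R')).toReal * ε₂ := by
          rw [integral_indicator_const _ measurableSet_Ioc, smul_eq_mul]; rfl
      _ = (2 * R') * ε₂ := by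
          rw [Real.volume_Ioc, ENNReal.toReal_ofReal (by linarith)]
          ring_nf
      _ ≤ ε / 2 := by
          have h1 : 2 * R' * ε₂ ≤ (2 * R' + 1) * ε₂ :=
            mul_le_mul_of_nonneg_right (by linarith) hε₂.le
          have h2 : (2 * R' + 1) * ε₂ = ε / 2 := by
            rw [hε₂def]; field_simp
          linarith
  refine ⟨s, hsint, ?_, hP⟩
  have habs : ∀ x, |f x - s x| ≤ |f x - f' x| + |f' x - s x| := fun x => abs_sub_le _ _ _
  calc ∫ x, |f x - s x|
      ≤ ∫ x, (|f x - f' x| + |f' x - s x|) :=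
        integral_mono (hf.sub hsint).abs
          ((hf.sub hf'int).abs.add (hf'int.sub hsint).abs) habs
    _ = (∫ x, |f x - f' x|) + ∫ x, |f' x - s x| :=
        integral_add (hf.sub hf'int).abs (hf'int.sub hsint).abs
    _ ≤ ε / 2 + ε / 2 := by
        refine add_le_add ?_ hclose2
        simpa [Real.norm_eq_abs] using hf'close
    _ = ε := by ring

theorem osc_main (hmeas : Measurable h) (hper : Function.Periodic h 1)
    (hC : ∀ x, |h x| ≤ C) {f : ℝ → ℝ} (hf : Integrable f) : OscP h f :=
  osc_closed hmeas hC hf fun _ hε => osc_step_approx hmeas hper hC hf hε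

end Osc

/-- Squeezing decorrelation lemma: for integrable `f` and essentially bounded
integrable `g` on `[a,b]`,
`∫ f · g_Δ → (1/(b-a)) (∫ f) (∫_a^b g)` as `Δ → 0⁺`. -/
theorem squeeze_decorrelation (f g : ℝ → ℝ) (a b : ℝ) (hab : a < b)
    (hf : Integrable f) (hg : IntegrableOn g (Set.Icc a b))
    (hgbdd : ∃ C : ℝ, ∀ᵐ x ∂(volume.restrict (Set.Icc a b)), |g x| ≤ C) :
    Tendsto (fun Δ : ℝ => ∫ x, f x * squeeze g a b Δ x) (nhdsWithin 0 (Set.Ioi 0))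
      (nhds ((1 / (b - a)) * (∫ x, f x) * ∫ t in a..b, g t)) := by
  obtain ⟨C₀, hC₀⟩ := hgbdd
  set C : ℝ := max C₀ 0 with hCdef
  have hCae : ∀ᵐ x ∂(volume.restrict (Set.Icc a b)), |g x| ≤ C :=
    hC₀.mono fun x hx => hx.trans (le_max_left _ _)
  have hba : (0:ℝ) < b - a := sub_pos.2 hab
  have hba' : b - a ≠ 0 := ne_of_gt hba
  -- measurable bounded representative g'
  have hgm := hg.1
  set g₁ : ℝ → ℝ := hgm.mk g with hg₁def
  have hg₁meas : StronglyMeasurable g₁ := hgm.stronglyMeasurable_mk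
  have hg₁ae : g =ᵐ[volume.restrict (Set.Icc a b)] g₁ := hgm.ae_eq_mk
  set g' : ℝ → ℝ := fun t => if |g₁ t| ≤ C then g₁ t else 0 with hg'def
  have hg'meas : Measurable g' :=
    Measurable.ite (measurableSet_le hg₁meas.measurable.abs measurable_const)
      hg₁meas.measurable measurable_const
  have hg'bdd : ∀ t, |g' t| ≤ C := by
    intro t
    by_cases ht : |g₁ t| ≤ C
    · simpa [hg'def, ht] using ht
    · simp [hg'def, ht, le_max_right C₀ 0]; exact le_max_right C₀ 0
  have hg'ae : g =ᵐ[volume.restrict (Set.Icc a b)] g' := by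
    filter_upwards [hg₁ae, hCae] with t h1 h2
    show g t = if |g₁ t| ≤ C then g₁ t else 0
    rw [← h1, if_pos (h1 ▸ h2)]
  -- the 1-periodic function h
  set h : ℝ → ℝ := fun y => g' (a + (b - a) * (y - (⌈y⌉ : ℝ) + 1)) with hhdef
  have hhmeas : Measurable h := by
    apply hg'meas.comp
    have hceil : Measurable (fun y : ℝ => ((⌈y⌉ : ℤ) : ℝ)) :=
      Measurable.comp (f := fun y : ℝ => ⌈y⌉) measurable_from_top Int.measurable_ceil
    fun_prop
  have hhper : Function.Periodic h 1 := by
    intro y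
    show g' _ = g' _
    congr 1
    rw [Int.ceil_add_one]
    push_cast
    ring
  have hhbdd : ∀ y, |h y| ≤ C := fun y => hg'bdd _
  -- value of the mean
  have hg'g : (∫ t in a..b, g' t) = ∫ t in a..b, g t := by
    rw [intervalIntegral.integral_of_le hab.le, intervalIntegral.integral_of_le hab.le]
    refine setIntegral_congr_ae measurableSet_Ioc ?_
    have hmono : volume.restrict (Set.Ioc a b) ≤ volume.restrict (Set.Icc a b) :=
      Measure.restrict_mono Set.Ioc_subset_Icc_self le_rfl
    have := (ae_restrict_iff' measurableSet_Ioc).1 (ae_mono hmono hg'ae)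
    filter_upwards [this] with t ht ht2 using (ht ht2).symm
  have hmean : (∫ y in (0:ℝ)..1, h y) = (b - a)⁻¹ * ∫ t in a..b, g t := by
    have step1 : (∫ y in (0:ℝ)..1, h y) = ∫ y in (0:ℝ)..1, g' ((b - a) * y + a) := by
      rw [intervalIntegral.integral_of_le zero_le_one, intervalIntegral.integral_of_le zero_le_one]
      refine setIntegral_congr_fun measurableSet_Ioc fun y hy => ?_
      show g' _ = g' _
      have hc : ⌈y⌉ = 1 :=
        Int.ceil_eq_iff.2 ⟨by push_cast; linarith [hy.1], by push_cast; exact hy.2⟩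
      rw [hc]
      push_cast
      ring_nf
    rw [step1, intervalIntegral.integral_comp_mul_add g' hba' a]
    norm_num [hg'g]
  -- squeeze g' equals h ∘ (·/Δ)
  have hsq : ∀ Δ : ℝ, Δ ∈ Set.Ioi (0:ℝ) → ∀ x, squeeze g' a b Δ x = h (x / Δ) := by
    intro Δ hΔ x
    have hΔ0 : Δ ≠ 0 := ne_of_gt hΔ
    show g' _ = g' _
    congr 1
    have e1 : (b - a) / Δ * (x - ((⌈x / Δ⌉:ℝ) - 1) * Δ)
        = (b - a) * (x / Δ - ((⌈x / Δ⌉:ℝ) - 1)) := by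
      field_simp
    rw [e1]
    ring
  -- a.e. equality of squeeze g and squeeze g'
  have hae_sq : ∀ Δ : ℝ, Δ ∈ Set.Ioi (0:ℝ) →
      (fun x => f x * squeeze g a b Δ x) =ᵐ[volume] fun x => f x * squeeze g' a b Δ x := by
    intro Δ hΔ
    rw [Set.mem_Ioi] at hΔ
    have hΔ0 : Δ ≠ 0 := ne_of_gt hΔ
    set σ : ℝ := (b - a) / Δ with hσdef
    have hσ : σ ≠ 0 := div_ne_zero hba' hΔ0
    set φ : ℝ → ℝ := fun x => a + σ * (x - ((⌈x / Δ⌉ : ℝ) - 1) * Δ) with hφdef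
    have hφmem : ∀ x, φ x ∈ Set.Ioc a b := by
      intro x
      set t : ℝ := x / Δ with htdef
      have h1 : (⌈t⌉ : ℝ) < t + 1 := Int.ceil_lt_add_one t
      have h2 : t ≤ (⌈t⌉ : ℝ) := Int.le_ceil t
      have hxe : x = Δ * t := by rw [htdef]; field_simp
      have hφx : φ x = a + (b - a) * (t - (⌈t⌉ : ℝ) + 1) := by
        rw [hφdef]
        simp only
        rw [hxe, hσdef]
        field_simp
        ring
      rw [hφx]
      constructor
      · nlinarith
      · nlinarith
    have hDnull : volume ({t | g t ≠ g' t} ∩ Set.Icc a b) = 0 := by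
      have h0 : volume.restrict (Set.Icc a b) {t | ¬ g t = g' t} = 0 := hg'ae
      rwa [Measure.restrict_apply' measurableSet_Icc] at h0
    have hnull : ∀ i : ℤ,
        volume ((fun x => a + σ * (x - ((i:ℝ) - 1) * Δ)) ⁻¹' ({t | g t ≠ g' t} ∩ Set.Icc a b)) = 0 := by
      intro i
      have heq : (fun x : ℝ => a + σ * (x - ((i:ℝ) - 1) * Δ))
          = (fun y : ℝ => y + (a - σ * (((i:ℝ) - 1) * Δ))) ∘ fun x : ℝ => σ * x := by
        funext x; simp [Function.comp]; ring
      rw [heq, Set.preimage_comp, Real.volume_preimage_mul_left hσ,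
        measure_preimage_add_right volume _ _, hDnull, mul_zero]
    have hUnull : volume {x | g (φ x) ≠ g' (φ x)} = 0 := by
      refine measure_mono_null (fun x hx => ?_)
        (measure_iUnion_null fun i : ℤ => hnull i)
      refine Set.mem_iUnion.2 ⟨⌈x / Δ⌉, hx, ?_⟩
      exact Set.Ioc_subset_Icc_self (hφmem x)
    have : ∀ᵐ x ∂volume, g (φ x) = g' (φ x) := by
      rw [ae_iff]
      exact hUnull
    filter_upwards [this] with x hx
    show f x * g _ = f x * g' _
    congr 1
  -- assemble
  have hmain := osc_main hhmeas hhper hhbdd hf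
  rw [OscP] at hmain
  have hlimeq : (1 / (b - a)) * (∫ x, f x) * ∫ t in a..b, g t
      = (∫ x, f x) * ∫ y in (0:ℝ)..1, h y := by
    rw [hmean]; ring
  rw [hlimeq]
  refine hmain.congr' ?_
  filter_upwards [self_mem_nhdsWithin] with Δ hΔ
  calc ∫ x, f x * h (x / Δ) = ∫ x, f x * squeeze g' a b Δ x :=
        integral_congr_ae (.of_forall fun x => by simp only [hsq Δ hΔ x])
    _ = ∫ x, f x * squeeze g a b Δ x := integral_congr_ae (hae_sq Δ hΔ).symm
end

section
/- Quantitative squeeze bound: with f ∈ L¹(ℝ), g : [a,b] → ℝ essentially bounded, g_Δ the Δ-periodic squeeze of g, L_Δ = ∫ f·g_Δ and L = (1/(b−a))(∫f)(∫_a^b g), one has |L_Δ − L| ≤ (ess sup_x |g(x)|) · Σ_{i∈ℤ} ∫_{iΔ}^{(i+1)Δ} |f(x) − (1/Δ)∫_{iΔ}^{(i+1)Δ} f| dx. -/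
open MeasureTheory Set

lemma sq_mem {Δ : ℝ} (hΔ : 0 < Δ) (x : ℝ) :
    ((⌈x / Δ⌉ : ℝ) - 1) * Δ < x ∧ x ≤ (⌈x / Δ⌉ : ℝ) * Δ := by
  constructor
  · rw [← lt_div_iff₀ hΔ]
    have := Int.ceil_lt_add_one (x / Δ)
    linarith
  · rw [← div_le_iff₀ hΔ]
    exact Int.le_ceil _

lemma null_preimage_affine {c : ℝ} (hc : c ≠ 0) (d : ℝ) {E : Set ℝ} (hE : volume E = 0) :
    volume ((fun x => c * x + d) ⁻¹' E) = 0 := by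
  have h1 : (fun x : ℝ => c * x + d) ⁻¹' E = (c * ·) ⁻¹' ((fun y => y + d) ⁻¹' E) := rfl
  rw [h1, Real.volume_preimage_mul_left hc, measure_preimage_add_right, hE, mul_zero]

lemma squeeze_null {a b Δ : ℝ} (hab : a < b) (hΔ : 0 < Δ) {E : Set ℝ}
    (hE : volume (E ∩ Icc a b) = 0) :
    volume {x : ℝ | a + (b - a) / Δ * (x - ((⌈x / Δ⌉ : ℝ) - 1) * Δ) ∈ E} = 0 := by
  set c := (b - a) / Δ with hc_def
  have hba : (0:ℝ) < b - a := sub_pos.2 hab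
  have hc : 0 < c := div_pos hba hΔ
  have hsub : {x : ℝ | a + c * (x - ((⌈x / Δ⌉ : ℝ) - 1) * Δ) ∈ E} ⊆
      ⋃ i : ℤ, (fun x => c * x + (a - c * ((i : ℝ) * Δ))) ⁻¹' (E ∩ Icc a b) := by
    intro x hx
    refine mem_iUnion.2 ⟨⌈x / Δ⌉ - 1, ?_⟩
    have hcast : ((⌈x / Δ⌉ - 1 : ℤ) : ℝ) = (⌈x / Δ⌉ : ℝ) - 1 := by push_cast; ring
    obtain ⟨h1, h2⟩ := sq_mem hΔ x
    have heq : c * x + (a - c * ((((⌈x / Δ⌉ - 1 : ℤ) : ℝ)) * Δ))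
        = a + c * (x - ((⌈x / Δ⌉ : ℝ) - 1) * Δ) := by rw [hcast]; ring
    rw [mem_preimage, heq]
    refine ⟨hx, ?_, ?_⟩
    · nlinarith
    · have : x - ((⌈x / Δ⌉ : ℝ) - 1) * Δ ≤ Δ := by linarith
      have hcΔ : c * Δ = b - a := by rw [hc_def]; exact div_mul_cancel₀ _ hΔ.ne'
      nlinarith
  refine measure_mono_null hsub (measure_iUnion_null fun i => ?_)
  exact null_preimage_affine hc.ne' _ hE

lemma squeeze_eqOn {g : ℝ → ℝ} {a b Δ : ℝ} (hΔ : 0 < Δ) (i : ℤ) :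
    EqOn (squeeze g a b Δ)
      (fun x => g ((b - a) / Δ * x + (a - (b - a) / Δ * ((i : ℝ) * Δ))))
      (Ioc ((i : ℝ) * Δ) (((i : ℝ) + 1) * Δ)) := by
  intro x hx
  have hceil : ⌈x / Δ⌉ = i + 1 := by
    rw [Int.ceil_eq_iff]
    push_cast
    constructor
    · rw [lt_div_iff₀ hΔ]; linarith [hx.1]
    · rw [div_le_iff₀ hΔ]; linarith [hx.2]
  simp only [squeeze, hceil]
  push_cast
  ring_nf

lemma squeeze_aesm {g : ℝ → ℝ} {a b Δ : ℝ} (hab : a < b) (hΔ : 0 < Δ)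
    (hg : AEStronglyMeasurable g (volume.restrict (Icc a b))) :
    AEStronglyMeasurable (squeeze g a b Δ) volume := by
  obtain ⟨g', hg', hgg'⟩ := hg
  have hmeas : Measurable (squeeze g' a b Δ) := by
    unfold squeeze
    apply hg'.measurable.comp
    have h0 : Measurable fun x : ℝ => ((⌈x / Δ⌉ : ℤ) : ℝ) :=
      measurable_from_top.comp (Int.measurable_ceil.comp (measurable_id.div_const Δ))
    exact measurable_const.add
      (((measurable_id.sub ((h0.sub measurable_const).mul_const Δ)).const_mul _))
  refine ⟨squeeze g' a b Δ, hmeas.stronglyMeasurable, ?_⟩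
  have hE : volume ({y | g y ≠ g' y} ∩ Icc a b) = 0 := by
    rw [← Measure.restrict_apply_eq_zero' measurableSet_Icc]
    exact hgg'
  have := squeeze_null hab hΔ hE
  refine measure_mono_null (fun x hx => ?_) this
  simp only [mem_setOf_eq] at hx ⊢
  exact fun h => hx (by simpa [squeeze] using h)

lemma squeeze_ae_bound {g : ℝ → ℝ} {a b Δ C : ℝ} (hab : a < b) (hΔ : 0 < Δ)
    (hC : ∀ᵐ x ∂(volume.restrict (Set.Icc a b)), |g x| ≤ C) :
    ∀ᵐ x, |squeeze g a b Δ x| ≤ C := by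
  have hE : volume ({y | ¬ |g y| ≤ C} ∩ Icc a b) = 0 := by
    rw [← Measure.restrict_apply_eq_zero' measurableSet_Icc]
    exact hC
  have := squeeze_null hab hΔ hE
  rw [ae_iff]
  refine measure_mono_null (fun x hx => ?_) this
  exact hx

lemma squeeze_setIntegral {g : ℝ → ℝ} {a b Δ : ℝ} (hab : a < b) (hΔ : 0 < Δ) (i : ℤ) :
    ∫ x in Ioc ((i : ℝ) * Δ) (((i : ℝ) + 1) * Δ), squeeze g a b Δ x
      = (Δ / (b - a)) * ∫ t in a..b, g t := by
  have hle : (i : ℝ) * Δ ≤ ((i : ℝ) + 1) * Δ := by nlinarith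
  have hc : (b - a) / Δ ≠ 0 := div_ne_zero (sub_pos.2 hab).ne' hΔ.ne'
  rw [setIntegral_congr_fun measurableSet_Ioc (squeeze_eqOn hΔ i),
    ← intervalIntegral.integral_of_le hle,
    intervalIntegral.integral_comp_mul_add g hc]
  have h1 : (b - a) / Δ * ((i : ℝ) * Δ) + (a - (b - a) / Δ * ((i : ℝ) * Δ)) = a := by ring
  have h2 : (b - a) / Δ * ((((i : ℝ) + 1)) * Δ) + (a - (b - a) / Δ * ((i : ℝ) * Δ)) = b := by
    field_simp
    ring
  rw [h1, h2, smul_eq_mul, inv_div]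

/-- Quantitative squeeze bound:
`|L_Δ - L| ≤ (ess sup |g|) Σᵢ ∫_{iΔ}^{(i+1)Δ} |f - avg f|`. -/
theorem squeeze_quantitative_bound (f g : ℝ → ℝ) (a b Δ : ℝ) (hab : a < b) (hΔ : 0 < Δ)
    (hf : Integrable f) (hg : IntegrableOn g (Set.Icc a b))
    (C : ℝ) (hC0 : 0 ≤ C) (hC : ∀ᵐ x ∂(volume.restrict (Set.Icc a b)), |g x| ≤ C) :
    |(∫ x, f x * squeeze g a b Δ x) -
        (1 / (b - a)) * (∫ x, f x) * ∫ t in a..b, g t| ≤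
      C * ∑' i : ℤ, ∫ x in Set.Ioc ((i : ℝ) * Δ) (((i : ℝ) + 1) * Δ),
        |f x - (1 / Δ) * ∫ t in Set.Ioc ((i : ℝ) * Δ) (((i : ℝ) + 1) * Δ), f t| := by
  have hΔ' : Δ ≠ 0 := hΔ.ne'
  have hba : (0:ℝ) < b - a := sub_pos.2 hab
  have hTm : ∀ i : ℤ, MeasurableSet (Ioc ((i:ℝ)*Δ) (((i:ℝ)+1)*Δ)) := fun _ => measurableSet_Ioc
  have hkey : ∀ i j : ℤ, i < j →
      Disjoint (Ioc ((i:ℝ)*Δ) (((i:ℝ)+1)*Δ)) (Ioc ((j:ℝ)*Δ) (((j:ℝ)+1)*Δ)) := by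
    intro i j h
    apply Set.Ioc_disjoint_Ioc.2
    have h0 : ((i:ℝ)+1) ≤ (j:ℝ) := by exact_mod_cast h
    have h1 : ((i:ℝ)+1)*Δ ≤ (j:ℝ)*Δ := by nlinarith
    exact le_trans (min_le_left _ _) (le_trans h1 (le_max_right _ _))
  have hTd : Pairwise (Function.onFun Disjoint fun i : ℤ => Ioc ((i:ℝ)*Δ) (((i:ℝ)+1)*Δ)) := by
    intro i j hij
    rcases hij.lt_or_gt with h | h
    · exact hkey _ _ h
    · exact (hkey _ _ h).symm
  have hTu : (⋃ i : ℤ, Ioc ((i:ℝ)*Δ) (((i:ℝ)+1)*Δ)) = univ := by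
    ext x
    simp only [mem_iUnion, mem_univ, iff_true]
    refine ⟨⌈x/Δ⌉ - 1, ?_⟩
    obtain ⟨h1, h2⟩ := sq_mem hΔ x
    have hcast : ((⌈x / Δ⌉ - 1 : ℤ) : ℝ) = (⌈x / Δ⌉ : ℝ) - 1 := by push_cast; ring
    rw [mem_Ioc, hcast]
    constructor
    · exact h1
    · nlinarith
  have hsm : AEStronglyMeasurable (squeeze g a b Δ) volume := squeeze_aesm hab hΔ hg.1
  have hbd : ∀ᵐ x, |squeeze g a b Δ x| ≤ C := squeeze_ae_bound hab hΔ hC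
  have hInt : Integrable (fun x => f x * squeeze g a b Δ x) := by
    refine Integrable.mono' (hf.norm.const_mul C) (hf.1.mul hsm) ?_
    filter_upwards [hbd] with x hx
    rw [norm_mul]
    simp only [Real.norm_eq_abs]
    calc |f x| * |squeeze g a b Δ x| ≤ |f x| * C :=
          mul_le_mul_of_nonneg_left hx (abs_nonneg _)
      _ = C * |f x| := mul_comm _ _
  have hfT : ∀ i : ℤ, IntegrableOn f (Ioc ((i:ℝ)*Δ) (((i:ℝ)+1)*Δ)) := fun i => hf.integrableOn
  have hTfin : ∀ i : ℤ, volume (Ioc ((i:ℝ)*Δ) (((i:ℝ)+1)*Δ)) < ⊤ := fun i => measure_Ioc_lt_top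
  have hsqInt : ∀ i : ℤ, IntegrableOn (squeeze g a b Δ) (Ioc ((i:ℝ)*Δ) (((i:ℝ)+1)*Δ)) := by
    intro i
    refine Integrable.mono' (g := fun _ => C) (integrableOn_const (hTfin i).ne)
      hsm.restrict ?_
    exact ae_restrict_of_ae (hbd.mono fun x hx => by simpa [Real.norm_eq_abs] using hx)
  -- notation
  set μi : ℤ → ℝ := fun i => ∫ x in Ioc ((i:ℝ)*Δ) (((i:ℝ)+1)*Δ), f x with hμ
  have hconstInt : ∀ i : ℤ, ∀ r : ℝ, IntegrableOn (fun _ => r) (Ioc ((i:ℝ)*Δ) (((i:ℝ)+1)*Δ)) :=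
    fun i r => integrableOn_const (hTfin i).ne
  have hsubInt : ∀ i : ℤ, IntegrableOn (fun x => f x - 1/Δ * μi i) (Ioc ((i:ℝ)*Δ) (((i:ℝ)+1)*Δ)) :=
    fun i => (hfT i).sub (hconstInt i _)
  have hprod : ∀ i : ℤ, IntegrableOn (fun x => (f x - 1/Δ * μi i) * squeeze g a b Δ x)
      (Ioc ((i:ℝ)*Δ) (((i:ℝ)+1)*Δ)) := by
    intro i
    refine Integrable.mono' (((hsubInt i).norm).const_mul C) ((hsubInt i).1.mul hsm.restrict) ?_
    filter_upwards [ae_restrict_of_ae hbd] with x hx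
    rw [norm_mul]
    simp only [Real.norm_eq_abs]
    calc |f x - 1/Δ * μi i| * |squeeze g a b Δ x| ≤ |f x - 1/Δ * μi i| * C :=
          mul_le_mul_of_nonneg_left hx (abs_nonneg _)
      _ = C * |f x - 1/Δ * μi i| := mul_comm _ _
  have hei : ∀ i : ℤ, (∫ x in Ioc ((i:ℝ)*Δ) (((i:ℝ)+1)*Δ), f x * squeeze g a b Δ x)
        - 1/(b-a) * μi i * ∫ t in a..b, g t
      = ∫ x in Ioc ((i:ℝ)*Δ) (((i:ℝ)+1)*Δ), (f x - 1/Δ * μi i) * squeeze g a b Δ x := by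
    intro i
    have h2 : IntegrableOn (fun x => f x * squeeze g a b Δ x)
        (Ioc ((i:ℝ)*Δ) (((i:ℝ)+1)*Δ)) := hInt.integrableOn
    have h3 : IntegrableOn (fun x => 1/Δ * μi i * squeeze g a b Δ x)
        (Ioc ((i:ℝ)*Δ) (((i:ℝ)+1)*Δ)) := (hsqInt i).const_mul _
    have hrw : ∀ x, (f x - 1/Δ * μi i) * squeeze g a b Δ x
        = f x * squeeze g a b Δ x - 1/Δ * μi i * squeeze g a b Δ x := fun x => by ring
    rw [show (fun x => (f x - 1/Δ * μi i) * squeeze g a b Δ x)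
        = fun x => f x * squeeze g a b Δ x - 1/Δ * μi i * squeeze g a b Δ x from funext hrw,
      integral_sub h2 h3, integral_const_mul, squeeze_setIntegral hab hΔ i]
    field_simp
  have hebd : ∀ i : ℤ, |(∫ x in Ioc ((i:ℝ)*Δ) (((i:ℝ)+1)*Δ), f x * squeeze g a b Δ x)
        - 1/(b-a) * μi i * ∫ t in a..b, g t|
      ≤ C * ∫ x in Ioc ((i:ℝ)*Δ) (((i:ℝ)+1)*Δ), |f x - 1/Δ * μi i| := by
    intro i
    rw [hei i]
    calc |∫ x in Ioc ((i:ℝ)*Δ) (((i:ℝ)+1)*Δ), (f x - 1/Δ * μi i) * squeeze g a b Δ x|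
        ≤ ∫ x in Ioc ((i:ℝ)*Δ) (((i:ℝ)+1)*Δ), |(f x - 1/Δ * μi i) * squeeze g a b Δ x| := by
          simpa only [Real.norm_eq_abs] using norm_integral_le_integral_norm
            (μ := volume.restrict (Ioc ((i:ℝ)*Δ) (((i:ℝ)+1)*Δ)))
            (fun x => (f x - 1/Δ * μi i) * squeeze g a b Δ x)
      _ ≤ ∫ x in Ioc ((i:ℝ)*Δ) (((i:ℝ)+1)*Δ), C * |f x - 1/Δ * μi i| := by
          refine integral_mono_ae ((hprod i).abs) (((hsubInt i).abs).const_mul C) ?_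
          filter_upwards [ae_restrict_of_ae hbd] with x hx
          rw [abs_mul]
          calc |f x - 1/Δ * μi i| * |squeeze g a b Δ x| ≤ |f x - 1/Δ * μi i| * C :=
                mul_le_mul_of_nonneg_left hx (abs_nonneg _)
            _ = C * |f x - 1/Δ * μi i| := mul_comm _ _
      _ = C * ∫ x in Ioc ((i:ℝ)*Δ) (((i:ℝ)+1)*Δ), |f x - 1/Δ * μi i| := integral_const_mul _ _
  -- HasSum facts
  have hS1 : HasSum (fun i : ℤ => ∫ x in Ioc ((i:ℝ)*Δ) (((i:ℝ)+1)*Δ), f x * squeeze g a b Δ x)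
      (∫ x, f x * squeeze g a b Δ x) := by
    have := hasSum_integral_iUnion hTm hTd (by rw [hTu]; exact integrableOn_univ.2 hInt)
    rwa [hTu, Measure.restrict_univ] at this
  have hS2 : HasSum μi (∫ x, f x) := by
    have := hasSum_integral_iUnion hTm hTd (by rw [hTu]; exact integrableOn_univ.2 hf)
    rwa [hTu, Measure.restrict_univ] at this
  have hSabs : HasSum (fun i : ℤ => ∫ x in Ioc ((i:ℝ)*Δ) (((i:ℝ)+1)*Δ), |f x|) (∫ x, |f x|) := by
    have := hasSum_integral_iUnion hTm hTd (by rw [hTu]; exact integrableOn_univ.2 hf.abs)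
    rwa [hTu, Measure.restrict_univ] at this
  -- summability of the D's
  have hvol : ∀ i : ℤ, (volume (Ioc ((i:ℝ)*Δ) (((i:ℝ)+1)*Δ))).toReal = Δ := by
    intro i
    rw [Real.volume_Ioc]
    rw [show ((i:ℝ)+1)*Δ - (i:ℝ)*Δ = Δ by ring, ENNReal.toReal_ofReal hΔ.le]
  have hDsum : Summable (fun i : ℤ => ∫ x in Ioc ((i:ℝ)*Δ) (((i:ℝ)+1)*Δ), |f x - 1/Δ * μi i|) := by
    refine Summable.of_nonneg_of_le (fun i => integral_nonneg fun x => abs_nonneg _)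
      (fun i => ?_) ((hSabs.summable).mul_left 2)
    have hm_bd : |1/Δ * μi i| * Δ ≤ ∫ x in Ioc ((i:ℝ)*Δ) (((i:ℝ)+1)*Δ), |f x| := by
      have h4 : |μi i| ≤ ∫ x in Ioc ((i:ℝ)*Δ) (((i:ℝ)+1)*Δ), |f x| := by
        simpa only [Real.norm_eq_abs] using norm_integral_le_integral_norm
          (μ := volume.restrict (Ioc ((i:ℝ)*Δ) (((i:ℝ)+1)*Δ))) f
      rw [abs_mul, abs_of_nonneg (by positivity : (0:ℝ) ≤ 1/Δ)]
      calc 1/Δ * |μi i| * Δ = |μi i| := by field_simp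
        _ ≤ _ := h4
    calc ∫ x in Ioc ((i:ℝ)*Δ) (((i:ℝ)+1)*Δ), |f x - 1/Δ * μi i|
        ≤ ∫ x in Ioc ((i:ℝ)*Δ) (((i:ℝ)+1)*Δ), (|f x| + |1/Δ * μi i|) := by
          refine integral_mono ((hsubInt i).abs) ((hfT i).abs.add (hconstInt i _)) ?_
          intro x
          exact abs_sub _ _
      _ = (∫ x in Ioc ((i:ℝ)*Δ) (((i:ℝ)+1)*Δ), |f x|) + |1/Δ * μi i| * Δ := by
          rw [integral_add ((hfT i).abs) (hconstInt i _), integral_const,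
            measureReal_restrict_apply_univ, measureReal_def, hvol i, smul_eq_mul, mul_comm Δ _]
      _ ≤ 2 * ∫ x in Ioc ((i:ℝ)*Δ) (((i:ℝ)+1)*Δ), |f x| := by linarith [hm_bd]
  -- conclude
  have hS3 : HasSum (fun i : ℤ => (∫ x in Ioc ((i:ℝ)*Δ) (((i:ℝ)+1)*Δ), f x * squeeze g a b Δ x)
        - 1/(b-a) * μi i * ∫ t in a..b, g t)
      ((∫ x, f x * squeeze g a b Δ x) - 1/(b-a) * (∫ x, f x) * ∫ t in a..b, g t) :=
    hS1.sub ((hS2.mul_left (1/(b-a))).mul_right _)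
  rw [← hS3.tsum_eq]
  have hnb : ∀ i : ℤ, ‖(∫ x in Ioc ((i:ℝ)*Δ) (((i:ℝ)+1)*Δ), f x * squeeze g a b Δ x)
      - 1/(b-a) * μi i * ∫ t in a..b, g t‖
      ≤ C * ∫ x in Ioc ((i:ℝ)*Δ) (((i:ℝ)+1)*Δ), |f x - 1/Δ * μi i| := fun i => by
    rw [Real.norm_eq_abs]; exact hebd i
  have hfin := tsum_of_norm_bounded (hDsum.hasSum.mul_left C) hnb
  rw [← Real.norm_eq_abs]
  exact hfin
end
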